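/- arXiv:2504.09128 — 5 statements merged into one kernel-verified Lean document; each statement's English description precedes it below -/
import Mathlib

section
/- Let S be a finite partially defined lattice satisfying Whitman's condition (W), in the sense that whenever ⋀U and ⋁V are defined in S and ⋀U ≤ ⋁V, then u ≤ ⋁V for some u ∈ U or ⋀U ≤ v for some v ∈ V. Then S is stable for doubling: for every lattice L, every interval I = [b,a] of L, and every PDL homomorphism r₀ : S → L, there exists a PDL homomorphism r₁ : S → L[I] such that λ ∘ r₁ = r₀, where λ : L[I] → L is the natural map. -/
open FirstOrder

namespace FreeLatticePaper

universe u v w u' v'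

/-- A partially defined lattice (PDL) structure on a partially ordered set `α`:
partial operations assigning to certain finite subsets a join and/or a meet,
which are required to be least upper bounds, resp. greatest lower bounds. -/
structure PDLOps (α : Type u) [PartialOrder α] where
  /-- The partial join operation. -/
  joinOf : Finset α → Part α
  /-- The partial meet operation. -/
  meetOf : Finset α → Part α
  isLUB_joinOf : ∀ (A : Finset α) (c : α), c ∈ joinOf A → IsLUB (↑A : Set α) c
  isGLB_meetOf : ∀ (A : Finset α) (c : α), c ∈ meetOf A → IsGLB (↑A : Set α) c

/-- A PDL homomorphism into a partially ordered set (e.g. a lattice): an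
order-preserving map sending every defined join to the least upper bound of the
image of its arguments, and dually for defined meets. -/
def PDLOps.IsHom {α : Type u} [PartialOrder α] (P : PDLOps α) {β : Type v} [PartialOrder β]
    (h : α → β) : Prop :=
  Monotone h ∧ (∀ (A : Finset α) (c : α), c ∈ P.joinOf A → IsLUB (h '' (↑A : Set α)) (h c)) ∧
    (∀ (A : Finset α) (c : α), c ∈ P.meetOf A → IsGLB (h '' (↑A : Set α)) (h c))

/-- Whitman's condition (W) for a PDL: whenever a meet `⋀U` and a join `⋁V`
are defined and `⋀U ≤ ⋁V`, some `u ∈ U` satisfies `u ≤ ⋁V` or some `v ∈ V`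
satisfies `⋀U ≤ v`. -/
def PDLOps.Whitman {α : Type u} [PartialOrder α] (P : PDLOps α) : Prop :=
  ∀ (U V : Finset α) (u v : α), u ∈ P.meetOf U → v ∈ P.joinOf V → u ≤ v →
    (∃ x ∈ U, x ≤ v) ∨ (∃ y ∈ V, u ≤ y)

/-- The underlying set of the doubling `L[I]` of the interval `I = [b, a]` in
the lattice `L`: an element of `L ∖ I` is tagged with `false`, and each element
of `I` occurs twice, tagged `false` ("lower copy") and `true` ("upper copy"). -/
def Doubled (L : Type u) [Lattice L] (b a : L) : Type u :=
  {p : L × Bool // p.1 ∈ Set.Icc b a ∨ p.2 = false}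

namespace Doubled

variable {L : Type u} [Lattice L] {b a : L}

instance instPartialOrder : PartialOrder (Doubled L b a) where
  le x y := x.1.1 ≤ y.1.1 ∧ (x.1.1 ∈ Set.Icc b a → y.1.1 ∈ Set.Icc b a → x.1.2 ≤ y.1.2)
  le_refl x := ⟨le_rfl, fun _ _ => le_rfl⟩
  le_trans x y z hxy hyz :=
    ⟨hxy.1.trans hyz.1, fun hx hz => by
      have hy : y.1.1 ∈ Set.Icc b a := ⟨hx.1.trans hxy.1, hyz.1.trans hz.2⟩
      exact (hxy.2 hx hy).trans (hyz.2 hy hz)⟩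
  le_antisymm x y hxy hyx := by
    have h1 : x.1.1 = y.1.1 := le_antisymm hxy.1 hyx.1
    have h2 : x.1.2 = y.1.2 := by
      by_cases hx : x.1.1 ∈ Set.Icc b a
      · have hy : y.1.1 ∈ Set.Icc b a := h1 ▸ hx
        exact le_antisymm (hxy.2 hx hy) (hyx.2 hy hx)
      · have hx2 : x.1.2 = false := x.2.resolve_left hx
        have hy2 : y.1.2 = false := y.2.resolve_left (by rw [← h1]; exact hx)
        rw [hx2, hy2]
    exact Subtype.ext (Prod.ext h1 h2)

/-- The natural projection `λ : L[I] → L`. -/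
def proj : Doubled L b a → L := fun x => x.1.1

end Doubled

section Aux

variable {α : Type u} [PartialOrder α] {L : Type v} [Lattice L] {b a : L}

lemma Doubled.le_iff {x y : Doubled L b a} :
    x ≤ y ↔ x.1.1 ≤ y.1.1 ∧ (x.1.1 ∈ Set.Icc b a → y.1.1 ∈ Set.Icc b a → x.1.2 ≤ y.1.2) :=
  Iff.rfl

/-- The set of elements to be sent to the upper copy: the least set that is
upward closed within the preimage of `I = [b, a]` and contains every defined
meet lying over `I` all of whose `I`-part arguments it already contains. -/
inductive InT (P : PDLOps α) (b a : L) (r₀ : α → L) : α → Prop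
  | up {x y : α} : InT P b a r₀ x → x ≤ y → r₀ y ∈ Set.Icc b a → InT P b a r₀ y
  | meet {U : Finset α} {c : α} : c ∈ P.meetOf U → r₀ c ∈ Set.Icc b a →
      (∀ u ∈ U, r₀ u ∈ Set.Icc b a → InT P b a r₀ u) → InT P b a r₀ c

lemma InT.icc {P : PDLOps α} {r₀ : α → L} {x : α} (h : InT P b a r₀ x) :
    r₀ x ∈ Set.Icc b a := by
  cases h with
  | up _ _ h => exact h
  | meet _ h _ => exact h

/-- Key consequence of Whitman's condition: if `x ∈ T` and `x ≤ ⋁V` with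
`r₀ (⋁V) ∈ I`, then some `v ∈ V` lies in `T`. -/
lemma InT.join_witness {P : PDLOps α} (hW : P.Whitman) {r₀ : α → L}
    (hmono : Monotone r₀) {x : α} (hx : InT P b a r₀ x) :
    ∀ {V : Finset α} {c : α}, c ∈ P.joinOf V → x ≤ c → r₀ c ∈ Set.Icc b a →
      ∃ v ∈ V, InT P b a r₀ v := by
  induction hx with
  | up _ hle _ ih =>
      intro V c hV hxc hcI
      exact ih hV (hle.trans hxc) hcI
  | @meet U x hU hxI hmem ih =>
      intro V c hV hxc hcI
      rcases hW U V x c hU hV hxc with ⟨u, huU, huc⟩ | ⟨v, hvV, hxv⟩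
      · have hIu : r₀ u ∈ Set.Icc b a :=
          ⟨hxI.1.trans (hmono ((P.isGLB_meetOf U x hU).1 huU)), (hmono huc).trans hcI.2⟩
        exact ih u huU hIu hV huc hcI
      · refine ⟨v, hvV, .up (.meet hU hxI hmem) hxv ?_⟩
        exact ⟨hxI.1.trans (hmono hxv),
          (hmono ((P.isLUB_joinOf V c hV).1 hvV)).trans hcI.2⟩

end Aux

/-- A finite partially defined lattice satisfying Whitman's
condition (W) is stable for doubling: every PDL homomorphism into a lattice `L`
lifts along the natural map `λ : L[I] → L`, for any interval `I = [b, a]`. -/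
theorem whitman_pdl_stable_for_doubling
    {α : Type u} [PartialOrder α] [Finite α] (P : PDLOps α) (hW : P.Whitman)
    (L : Type v) [Lattice L] (b a : L) (hba : b ≤ a)
    (r₀ : α → L) (h₀ : P.IsHom r₀) :
    ∃ r₁ : α → Doubled L b a, P.IsHom r₁ ∧ Doubled.proj ∘ r₁ = r₀ := by
  classical
  obtain ⟨hmono, hjoin, hmeet⟩ := h₀
  set T : α → Prop := InT P b a r₀ with hTdef
  let ε : α → Bool := fun x => if T x then true else false
  have hεT : ∀ x, ε x = true ↔ T x := by
    intro x; by_cases h : T x <;> simp [ε, h]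
  have hvalid : ∀ x, r₀ x ∈ Set.Icc b a ∨ ε x = false := by
    intro x
    by_cases h : T x
    · exact Or.inl h.icc
    · exact Or.inr (by simp [ε, h])
  set r₁ : α → Doubled L b a := fun x => ⟨(r₀ x, ε x), hvalid x⟩ with hr₁def
  have hεmono : ∀ {x y : α}, x ≤ y → r₀ y ∈ Set.Icc b a → ε x ≤ ε y := by
    intro x y hxy hyI
    by_cases hx : T x
    · have hy : T y := hx.up hxy hyI
      simp [ε, hx, hy]
    · simp [ε, hx]
  have hr₁mono : Monotone r₁ := by
    intro x y hxy
    exact ⟨hmono hxy, fun _ hyI => hεmono hxy hyI⟩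
  refine ⟨r₁, ⟨hr₁mono, ?_, ?_⟩, funext fun x => rfl⟩
  · -- joins
    intro A c hc
    have hLc := hjoin A c hc
    have hαc := P.isLUB_joinOf A c hc
    constructor
    · rintro _ ⟨x, hxA, rfl⟩
      exact hr₁mono (hαc.1 hxA)
    · rintro ⟨⟨w, t⟩, hwt⟩ hub
      have hwub : w ∈ upperBounds (r₀ '' (↑A : Set α)) := by
        rintro _ ⟨x, hxA, rfl⟩
        exact (hub (Set.mem_image_of_mem r₁ hxA)).1
      refine ⟨hLc.2 hwub, fun hcI hwI => ?_⟩
      by_cases hTc : T c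
      · obtain ⟨v, hvA, hTv⟩ := InT.join_witness hW hmono hTc hc le_rfl hcI
        have h1 : ε v ≤ t := (hub (Set.mem_image_of_mem r₁ hvA)).2 hTv.icc hwI
        show ε c ≤ t
        rw [(hεT c).2 hTc]
        rw [(hεT v).2 hTv] at h1
        exact h1
      · simp [r₁, ε, hTc]
  · -- meets
    intro A c hc
    have hGc := hmeet A c hc
    have hαc := P.isGLB_meetOf A c hc
    constructor
    · rintro _ ⟨x, hxA, rfl⟩
      exact hr₁mono (hαc.1 hxA)
    · rintro ⟨⟨w, t⟩, hwt⟩ hlb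
      have hwlb : w ∈ lowerBounds (r₀ '' (↑A : Set α)) := by
        rintro _ ⟨x, hxA, rfl⟩
        exact (hlb (Set.mem_image_of_mem r₁ hxA)).1
      refine ⟨hGc.2 hwlb, fun hwI hcI => ?_⟩
      cases t with
      | false => exact Bool.false_le _
      | true =>
          have hTc : T c := by
            refine InT.meet hc hcI fun u huA huI => ?_
            have h2 : (true : Bool) ≤ ε u := (hlb (Set.mem_image_of_mem r₁ huA)).2 hwI huI
            cases hεu : ε u with
            | true => exact (hεT u).1 hεu
            | false => rw [hεu] at h2; exact absurd h2 (by decide)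
          simp [r₁, ε, hTc]

end FreeLatticePaper
end

section
/- Let L be a finite lattice and I an interval of L. Then L is bounded if and only if the doubled lattice L[I] is bounded. -/
open FirstOrder

namespace FreeLatticePaper

universe u v w u' v'

/-- `p` is join prime: whenever `p` lies below the least upper bound of a
finite set, it lies below some member of that set. -/
def JoinPrimeIn (α : Type u) [PartialOrder α] (p : α) : Prop :=
  ∀ (A : Finset α) (s : α), IsLUB (↑A : Set α) s → p ≤ s → ∃ a ∈ A, p ≤ a

/-- The sets `D_k`: `D_0` is the set of join primes, and `a ∈ D_{k+1}` if every
nontrivial join cover of `a` has a refinement contained in `D_k` which is still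
a join cover of `a`. -/
def Dset (α : Type u) [PartialOrder α] : ℕ → Set α
  | 0 => {p | JoinPrimeIn α p}
  | (k + 1) => {p | ∀ (A : Finset α) (s : α), IsLUB (↑A : Set α) s → p ≤ s →
      (∀ a ∈ A, ¬ p ≤ a) →
      ∃ (U : Finset α) (t : α), (↑U : Set α) ⊆ Dset α k ∧ (∀ u ∈ U, ∃ a ∈ A, u ≤ a) ∧
        IsLUB (↑U : Set α) t ∧ p ≤ t}

/-- `D(L) = ⋃ₖ D_k(L)`. -/
def DFull (α : Type u) [PartialOrder α] : Set α := ⋃ k, Dset α k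

/-- The dual (meet-side) notion `D^d(L)`. -/
def DdFull (α : Type u) [PartialOrder α] : Set α :=
  {p | OrderDual.toDual p ∈ DFull αᵒᵈ}

/-- A (finite) lattice is bounded if `D(L) = L = D^d(L)`. -/
def IsBoundedLat (α : Type u) [PartialOrder α] : Prop :=
  DFull α = Set.univ ∧ DdFull α = Set.univ


/-! ### Generic D-theory -/

section DTheory

variable {α : Type*} [PartialOrder α]

lemma dset_succ (k : ℕ) : Dset α k ⊆ Dset α (k + 1) := by
  induction k with
  | zero =>
    intro p hp A s hl hps hnt
    obtain ⟨x, hx, hpx⟩ := hp A s hl hps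
    exact absurd hpx (hnt x hx)
  | succ k ih =>
    intro p hp A s hl hps hnt
    obtain ⟨U, t, h1, h2, h3, h4⟩ := hp A s hl hps hnt
    exact ⟨U, t, fun u hu => ih (h1 hu), h2, h3, h4⟩

lemma dset_mono {k m : ℕ} (h : k ≤ m) : Dset α k ⊆ Dset α m := by
  induction h with
  | refl => exact subset_rfl
  | step _ ih => exact ih.trans (dset_succ _)

lemma mem_dfull {p : α} : p ∈ DFull α ↔ ∃ k, p ∈ Dset α k := Set.mem_iUnion

lemma dset_subset_dfull (k : ℕ) : Dset α k ⊆ DFull α :=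
  Set.subset_iUnion (fun k => Dset α k) k

lemma exists_stab (α : Type*) [PartialOrder α] [Finite α] :
    ∃ N, DFull α ⊆ Dset α N := by
  classical
  haveI := Fintype.ofFinite α
  have hch : ∀ p : α, ∃ k, p ∈ DFull α → p ∈ Dset α k := by
    intro p
    by_cases hp : p ∈ DFull α
    · obtain ⟨k, hk⟩ := mem_dfull.mp hp
      exact ⟨k, fun _ => hk⟩
    · exact ⟨0, fun h => absurd h hp⟩
  choose f hf using hch
  refine ⟨Finset.univ.sup f, fun p hp => ?_⟩
  exact dset_mono (Finset.le_sup (Finset.mem_univ p)) (hf p hp)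

/-- The "closure" lemma: to show `p ∈ DFull α` it suffices to refine each
nontrivial join cover into `DFull α` (no common index needed). -/
lemma mem_dfull_of_covers [Finite α] {p : α}
    (h : ∀ (A : Finset α) (s : α), IsLUB (↑A : Set α) s → p ≤ s →
      (∀ x ∈ A, ¬ p ≤ x) →
      ∃ (U : Finset α) (t : α), (↑U : Set α) ⊆ DFull α ∧ (∀ u ∈ U, ∃ x ∈ A, u ≤ x) ∧
        IsLUB (↑U : Set α) t ∧ p ≤ t) :
    p ∈ DFull α := by
  obtain ⟨N, hN⟩ := exists_stab α
  refine dset_subset_dfull (N + 1) ?_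
  intro A s hl hps hnt
  obtain ⟨U, t, h1, h2, h3, h4⟩ := h A s hl hps hnt
  exact ⟨U, t, fun u hu => hN (h1 hu), h2, h3, h4⟩

end DTheory

/-! ### Strongly minimal join covers and the D-relation -/

section SMTheory

variable {α : Type*} [PartialOrder α]

/-- `U` refines `A`: every element of `U` is below some element of `A`. -/
def Refines (U A : Finset α) : Prop := ∀ u ∈ U, ∃ x ∈ A, u ≤ x

/-- `U` is a join cover of `p`. -/
def CovSet (p : α) (U : Finset α) : Prop := ∃ t, IsLUB (↑U : Set α) t ∧ p ≤ t

/-- `Q` is a strongly minimal nontrivial join cover of `p`. -/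
def SMCov (p : α) (Q : Finset α) : Prop :=
  CovSet p Q ∧ (∀ x ∈ Q, ¬ p ≤ x) ∧ IsAntichain (· ≤ ·) (↑Q : Set α) ∧
    ∀ U : Finset α, CovSet p U → Refines U Q → Q ⊆ U

/-- The join-dependency-style relation: `q` belongs to some strongly minimal
nontrivial join cover of `p`. -/
def Drel (q p : α) : Prop := ∃ Q, SMCov p Q ∧ q ∈ Q

lemma Refines.rfl' {A : Finset α} : Refines A A := fun u hu => ⟨u, hu, le_rfl⟩

lemma Refines.trans' {U V W : Finset α} (h1 : Refines U V) (h2 : Refines V W) :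
    Refines U W := by
  intro u hu
  obtain ⟨v, hv, huv⟩ := h1 u hu
  obtain ⟨w, hw, hvw⟩ := h2 v hv
  exact ⟨w, hw, huv.trans hvw⟩

/-- Every element of a finite set has a maximal element above it. -/
lemma exists_maximal_above (W : Finset α) {w : α} (hw : w ∈ W) :
    ∃ m ∈ W, w ≤ m ∧ ∀ v ∈ W, m ≤ v → v ≤ m := by
  classical
  obtain ⟨m, hm, hmax⟩ : ∃ m ∈ W.filter (fun v => w ≤ v),
      ∀ x ∈ W.filter (fun v => w ≤ v), ¬ m < x := by
    obtain ⟨m, hm⟩ := Finset.exists_maximal (s := W.filter (fun v => w ≤ v))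
      ⟨w, Finset.mem_filter.mpr ⟨hw, le_rfl⟩⟩
    exact ⟨m, hm.1, fun x hx hlt => hlt.not_ge (hm.2 hx hlt.le)⟩
  rw [Finset.mem_filter] at hm
  refine ⟨m, hm.1, hm.2, fun v hv hmv => ?_⟩
  have hvf : v ∈ W.filter (fun v => w ≤ v) :=
    Finset.mem_filter.mpr ⟨hv, hm.2.trans hmv⟩
  have := hmax v hvf
  rw [lt_iff_le_not_ge] at this
  push_neg at this
  exact this hmv

/-- The set of maximal elements of a finite set. -/
noncomputable def maxF (W : Finset α) : Finset α := by
  classical exact W.filter (fun x => ∀ v ∈ W, x ≤ v → v ≤ x)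

lemma maxF_subset (W : Finset α) : maxF W ⊆ W := by
  classical
  intro x hx; rw [maxF] at hx; simp only [Finset.mem_filter] at hx; exact hx.1

lemma maxF_antichain (W : Finset α) : IsAntichain (· ≤ ·) (↑(maxF W) : Set α) := by
  classical
  intro x hx y hy hxy hle
  rw [Finset.mem_coe, maxF, Finset.mem_filter] at hx hy
  exact hxy (le_antisymm hle (hx.2 y hy.1 hle))

lemma maxF_dominates (W : Finset α) {w : α} (hw : w ∈ W) :
    ∃ m ∈ maxF W, w ≤ m := by
  classical
  obtain ⟨m, hm, hwm, hmax⟩ := exists_maximal_above W hw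
  exact ⟨m, by rw [maxF]; exact Finset.mem_filter.mpr ⟨hm, hmax⟩, hwm⟩

lemma maxF_isLUB {W : Finset α} {t : α} (h : IsLUB (↑W : Set α) t) :
    IsLUB (↑(maxF W) : Set α) t := by
  constructor
  · exact fun x hx => h.1 (maxF_subset W hx)
  · intro z hz
    refine h.2 ?_
    intro w hw
    obtain ⟨m, hm, hwm⟩ := maxF_dominates W hw
    exact hwm.trans (hz hm)

lemma maxF_refines (W : Finset α) : Refines W (maxF W) := fun _ hw => maxF_dominates W hw

/-- Antisymmetry of the refinement order on antichains. -/
lemma refines_antisymm {U V : Finset α} (hU : IsAntichain (· ≤ ·) (↑U : Set α))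
    (h1 : Refines U V) (h2 : Refines V U) : U ⊆ V := by
  intro x hx
  obtain ⟨v, hv, hxv⟩ := h1 x hx
  obtain ⟨u, hu, hvu⟩ := h2 v hv
  have hxu : x ≤ u := hxv.trans hvu
  have hxeq : x = u := by
    by_contra hne
    exact hU (Finset.mem_coe.mpr hx) (Finset.mem_coe.mpr hu) hne hxu
  have : x = v := le_antisymm hxv (hxeq ▸ hvu)
  exact this ▸ hv

/-- **Existence of strongly minimal refinements** in a finite poset. -/
lemma exists_sm_refines [Finite α] {p : α} {A : Finset α}
    (hA : CovSet p A) (hnt : ∀ x ∈ A, ¬ p ≤ x) :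
    ∃ Q, SMCov p Q ∧ Refines Q A := by
  classical
  haveI := Fintype.ofFinite α
  set 𝒜 : Finset (Finset α) := Finset.univ.filter
    (fun U => CovSet p U ∧ Refines U A ∧ IsAntichain (· ≤ ·) (↑U : Set α)) with h𝒜
  have mem𝒜 : ∀ U : Finset α, U ∈ 𝒜 ↔
      CovSet p U ∧ Refines U A ∧ IsAntichain (· ≤ ·) (↑U : Set α) := by
    intro U; rw [h𝒜, Finset.mem_filter]; simp
  have hAne : maxF A ∈ 𝒜 := by
    rw [mem𝒜]
    obtain ⟨t, ht, hpt⟩ := hA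
    exact ⟨⟨t, maxF_isLUB ht, hpt⟩,
      fun u hu => ⟨u, maxF_subset A hu, le_rfl⟩,
      maxF_antichain A⟩
  obtain ⟨Q, hQ𝒜, hQmin⟩ := Finset.exists_min_image 𝒜
    (fun U => (𝒜.filter (fun V => Refines V U)).card) ⟨_, hAne⟩
  rw [mem𝒜] at hQ𝒜
  obtain ⟨hQcov, hQref, hQanti⟩ := hQ𝒜
  -- key: any member of 𝒜 refining Q is refined by Q
  have key : ∀ V ∈ 𝒜, Refines V Q → Refines Q V := by
    intro V hV hVQ
    have hsub : 𝒜.filter (fun W => Refines W V) ⊆ 𝒜.filter (fun W => Refines W Q) := by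
      intro W hW
      rw [Finset.mem_filter] at hW ⊢
      exact ⟨hW.1, hW.2.trans' hVQ⟩
    have hle := Finset.card_le_card hsub
    have hge := hQmin V hV
    have hcard : (𝒜.filter (fun W => Refines W V)).card =
        (𝒜.filter (fun W => Refines W Q)).card := le_antisymm hle hge
    have heq := Finset.eq_of_subset_of_card_le hsub (le_of_eq hcard.symm)
    have hQself : Q ∈ 𝒜.filter (fun W => Refines W Q) := by
      rw [Finset.mem_filter]
      exact ⟨by rw [mem𝒜]; exact ⟨hQcov, hQref, hQanti⟩, Refines.rfl'⟩
    rw [← heq, Finset.mem_filter] at hQself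
    exact hQself.2
  refine ⟨Q, ⟨hQcov, ?_, hQanti, ?_⟩, hQref⟩
  · intro x hx
    obtain ⟨y, hy, hxy⟩ := hQref x hx
    intro hpx
    exact hnt y hy (hpx.trans hxy)
  · intro U hUcov hUQ
    have hmU : maxF U ∈ 𝒜 := by
      rw [mem𝒜]
      obtain ⟨t, ht, hpt⟩ := hUcov
      refine ⟨⟨t, maxF_isLUB ht, hpt⟩, ?_, maxF_antichain U⟩
      have : Refines (maxF U) Q := fun u hu => hUQ u (maxF_subset U hu)
      exact this.trans' hQref
    have hmUQ : Refines (maxF U) Q := fun u hu => hUQ u (maxF_subset U hu)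
    have hQmU : Refines Q (maxF U) := key (maxF U) hmU hmUQ
    have : Q ⊆ maxF U := refines_antisymm hQanti hQmU hmUQ
    exact this.trans (maxF_subset U)

/-- If `DFull α = univ` then the D-relation is well-founded. -/
lemma drel_wf_of_full (hfull : DFull α = Set.univ) : WellFounded (Drel (α := α)) := by
  classical
  have hex : ∀ x : α, ∃ k, x ∈ Dset α k := by
    intro x
    exact mem_dfull.mp (hfull ▸ Set.mem_univ x)
  refine Subrelation.wf (r := InvImage (· < ·) (fun x => Nat.find (hex x))) ?_
    (InvImage.wf _ Nat.lt_wfRel.wf)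
  intro q p hqp
  obtain ⟨Q, ⟨⟨s, hl, hps⟩, hnt, _hanti, hsm⟩, hqQ⟩ := hqp
  show Nat.find (hex q) < Nat.find (hex p)
  have hp : p ∈ Dset α (Nat.find (hex p)) := Nat.find_spec (hex p)
  rcases hfind : Nat.find (hex p) with _ | m
  · rw [hfind] at hp
    obtain ⟨x, hx, hpx⟩ := hp Q s hl hps
    exact absurd hpx (hnt x hx)
  · rw [hfind] at hp
    obtain ⟨U, t, hUD, hUref, hlubU, hpt⟩ := hp Q s hl hps hnt
    have hQU : Q ⊆ U := hsm U ⟨t, hlubU, hpt⟩ hUref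
    have hq : q ∈ Dset α m := hUD (Finset.mem_coe.mpr (hQU hqQ))
    exact lt_of_le_of_lt (Nat.find_min' (hex q) hq) (by omega)

/-- If the D-relation is well-founded (and `α` is finite) then `DFull α = univ`. -/
lemma dfull_univ_of_wf [Finite α] (hwf : WellFounded (Drel (α := α))) :
    DFull α = Set.univ := by
  ext p
  simp only [Set.mem_univ, iff_true]
  induction p using hwf.induction with
  | _ p IH =>
    apply mem_dfull_of_covers
    intro A s hl hps hnt
    obtain ⟨Q, hSM, hrefA⟩ := exists_sm_refines ⟨s, hl, hps⟩ hnt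
    obtain ⟨t, hlt, hpt⟩ := hSM.1
    exact ⟨Q, t, fun x hx => IH x ⟨Q, hSM, Finset.mem_coe.mp hx⟩, hrefA, hlt, hpt⟩

end SMTheory

/-! ### API for the doubled lattice -/

namespace Doubled

attribute [local instance] Classical.propDecidable

variable {L : Type u} [Lattice L] {b a : L}

lemma le_def' {x y : Doubled L b a} :
    x ≤ y ↔ (x.1.1 ≤ y.1.1 ∧ (x.1.1 ∈ Set.Icc b a → y.1.1 ∈ Set.Icc b a → x.1.2 ≤ y.1.2)) :=
  Iff.rfl

lemma proj_mono {x y : Doubled L b a} (h : x ≤ y) : proj x ≤ proj y := h.1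

lemma bool_eq_false {x : Doubled L b a} (h : x.1.1 ∉ Set.Icc b a) : x.1.2 = false :=
  x.2.resolve_left h

/-- The lower-copy section `σ₀ : L → L[I]`. -/
def sec0 (v : L) : Doubled L b a := ⟨(v, false), Or.inr rfl⟩

@[simp] lemma proj_sec0 (v : L) : proj (sec0 v : Doubled L b a) = v := rfl

lemma sec0_le_iff {v : L} {y : Doubled L b a} : sec0 v ≤ y ↔ v ≤ proj y := by
  constructor
  · exact fun h => h.1
  · exact fun h => ⟨h, fun _ _ => Bool.false_le _⟩

lemma sec0_mono {v w : L} (h : v ≤ w) : (sec0 v : Doubled L b a) ≤ sec0 w :=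
  sec0_le_iff.mpr h

lemma sec0_le_sec0_iff {v w : L} : (sec0 v : Doubled L b a) ≤ sec0 w ↔ v ≤ w :=
  sec0_le_iff

/-- The upper section, used only as an auxiliary upper bound. -/
noncomputable def sec1 (w : L) : Doubled L b a := by
  classical
  exact if h : w ∈ Set.Icc b a then ⟨(w, true), Or.inl h⟩ else ⟨(w, false), Or.inr rfl⟩

@[simp] lemma proj_sec1 (w : L) : proj (sec1 w : Doubled L b a) = w := by
  by_cases h : w ∈ Set.Icc b a
  · rw [show (sec1 w : Doubled L b a) = _ from dif_pos h]; rfl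
  · rw [show (sec1 w : Doubled L b a) = _ from dif_neg h]; rfl

lemma le_sec1 {w : L} {x : Doubled L b a} (h : proj x ≤ w) : x ≤ sec1 w := by
  by_cases hw : w ∈ Set.Icc b a
  · rw [show (sec1 w : Doubled L b a) = _ from dif_pos hw]
    exact ⟨h, fun _ _ => Bool.le_true _⟩
  · rw [show (sec1 w : Doubled L b a) = _ from dif_neg hw]
    exact ⟨h, fun _ hw' => absurd hw' hw⟩

/-- `proj` sends LUBs to LUBs. -/
lemma isLUB_image_proj {U : Finset (Doubled L b a)} {t : Doubled L b a}
    (h : IsLUB (↑U : Set (Doubled L b a)) t) :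
    IsLUB (↑(U.image proj) : Set L) (proj t) := by
  constructor
  · rintro w hw
    rw [Finset.coe_image] at hw
    obtain ⟨y, hy, rfl⟩ := hw
    exact proj_mono (h.1 hy)
  · intro w hw
    have h1 : (sec1 w : Doubled L b a) ∈ upperBounds (↑U : Set (Doubled L b a)) := by
      intro y hy
      refine le_sec1 (hw ?_)
      rw [Finset.coe_image]
      exact Set.mem_image_of_mem _ hy
    have := h.2 h1
    calc proj t ≤ proj (sec1 w : Doubled L b a) := proj_mono this
      _ = w := proj_sec1 w

/-- `σ₀` sends LUBs to LUBs. -/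
lemma isLUB_image_sec0 {W : Finset L} {t : L} (h : IsLUB (↑W : Set L) t) :
    IsLUB (↑(W.image (sec0 : L → Doubled L b a)) : Set (Doubled L b a)) (sec0 t) := by
  constructor
  · rintro y hy
    rw [Finset.coe_image] at hy
    obtain ⟨w, hw, rfl⟩ := hy
    exact sec0_mono (h.1 hw)
  · intro z hz
    rw [sec0_le_iff]
    refine h.2 ?_
    intro w hw
    have : sec0 w ≤ z := by
      refine hz ?_
      rw [Finset.coe_image]
      exact Set.mem_image_of_mem _ hw
    exact sec0_le_iff.mp this

end Doubled

namespace Doubled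

variable {L : Type u} [Lattice L] {b a : L}

instance instFinite [Finite L] : Finite (Doubled L b a) := by
  unfold Doubled; exact Subtype.finite

/-- Join on the doubled lattice. -/
noncomputable def dsup (x y : Doubled L b a) : Doubled L b a := by
  classical
  exact ⟨(x.1.1 ⊔ y.1.1,
    if (x.1.1 ⊔ y.1.1 ∈ Set.Icc b a) ∧
        ((x.1.1 ∈ Set.Icc b a ∧ x.1.2 = true) ∨ (y.1.1 ∈ Set.Icc b a ∧ y.1.2 = true))
      then true else false), by
        split
        · next h => exact Or.inl h.1
        · exact Or.inr rfl⟩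

/-- Meet on the doubled lattice. -/
noncomputable def dinf (x y : Doubled L b a) : Doubled L b a := by
  classical
  exact ⟨(x.1.1 ⊓ y.1.1,
    if (x.1.1 ⊓ y.1.1 ∈ Set.Icc b a) ∧
        (x.1.1 ∈ Set.Icc b a → x.1.2 = true) ∧ (y.1.1 ∈ Set.Icc b a → y.1.2 = true)
      then true else false), by
        split
        · next h => exact Or.inl h.1
        · exact Or.inr rfl⟩

noncomputable instance instLattice : Lattice (Doubled L b a) where
  sup := dsup
  le_sup_left x y := by
    refine ⟨le_sup_left, fun hx hxy => ?_⟩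
    show x.1.2 ≤ (dsup x y).1.2
    rcases hb : x.1.2 with _ | _
    · exact Bool.false_le _
    · have : (dsup x y).1.2 = true := by
        rw [dsup]; simp only
        rw [if_pos ⟨hxy, Or.inl ⟨hx, hb⟩⟩]
      rw [this]
  le_sup_right x y := by
    refine ⟨le_sup_right, fun hy hxy => ?_⟩
    show y.1.2 ≤ (dsup x y).1.2
    rcases hb : y.1.2 with _ | _
    · exact Bool.false_le _
    · have : (dsup x y).1.2 = true := by
        rw [dsup]; simp only
        rw [if_pos ⟨hxy, Or.inr ⟨hy, hb⟩⟩]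
      rw [this]
  sup_le x y z hxz hyz := by
    refine ⟨sup_le hxz.1 hyz.1, fun hxy hz => ?_⟩
    show (dsup x y).1.2 ≤ z.1.2
    rw [dsup]; simp only
    split
    · next h =>
      rcases h.2 with ⟨hx, hxb⟩ | ⟨hy, hyb⟩
      · have := hxz.2 hx hz
        rw [hxb] at this
        exact this
      · have := hyz.2 hy hz
        rw [hyb] at this
        exact this
    · exact Bool.false_le _
  inf := dinf
  inf_le_left x y := by
    refine ⟨inf_le_left, fun hxy hx => ?_⟩
    show (dinf x y).1.2 ≤ x.1.2
    rw [dinf]; simp only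
    split
    · next h => rw [h.2.1 hx]
    · exact Bool.false_le _
  inf_le_right x y := by
    refine ⟨inf_le_right, fun hxy hy => ?_⟩
    show (dinf x y).1.2 ≤ y.1.2
    rw [dinf]; simp only
    split
    · next h => rw [h.2.2 hy]
    · exact Bool.false_le _
  le_inf z x y hzx hzy := by
    refine ⟨le_inf hzx.1 hzy.1, fun hz hxy => ?_⟩
    show z.1.2 ≤ (dinf x y).1.2
    rcases hb : z.1.2 with _ | _
    · exact Bool.false_le _
    · have hxc : x.1.1 ∈ Set.Icc b a → x.1.2 = true := by
        intro hx
        have := hzx.2 hz hx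
        rw [hb] at this
        exact Bool.eq_true_of_true_le this
      have hyc : y.1.1 ∈ Set.Icc b a → y.1.2 = true := by
        intro hy
        have := hzy.2 hz hy
        rw [hb] at this
        exact Bool.eq_true_of_true_le this
      have : (dinf x y).1.2 = true := by
        rw [dinf]; simp only
        rw [if_pos ⟨hxy, hxc, hyc⟩]
      rw [this]

variable (hba : b ≤ a)

/-- The upper copy of `b`. -/
def bone (hba : b ≤ a) : Doubled L b a := ⟨(b, true), Or.inl ⟨le_rfl, hba⟩⟩

lemma bone_le_iff {y : Doubled L b a} :
    bone hba ≤ y ↔ b ≤ proj y ∧ (proj y ∈ Set.Icc b a → y.1.2 = true) := by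
  constructor
  · intro h
    refine ⟨h.1, fun hy => ?_⟩
    have := h.2 ⟨le_rfl, hba⟩ hy
    exact Bool.eq_true_of_true_le this
  · intro ⟨h1, h2⟩
    exact ⟨h1, fun _ hy => (h2 hy) ▸ le_rfl⟩

/-- For `u ∈ [b,a]`, the upper copy `(u,1)` is the join of `(u,0)` and `(b,1)`. -/
lemma isLUB_pair_bone {u : L} (hu : u ∈ Set.Icc b a) :
    IsLUB ({sec0 u, bone hba} : Set (Doubled L b a)) ⟨(u, true), Or.inl hu⟩ := by
  constructor
  · rintro y (rfl | rfl)
    · exact ⟨le_rfl, fun _ _ => Bool.false_le _⟩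
    · exact ⟨hu.1, fun _ _ => le_rfl⟩
  · intro z hz
    have h1 : sec0 u ≤ z := hz (Set.mem_insert _ _)
    have h2 : bone hba ≤ z := hz (Set.mem_insert_of_mem _ rfl)
    refine ⟨h1.1, fun _ hz' => ?_⟩
    have := (bone_le_iff hba).mp h2
    rw [this.2 ⟨(this.1), hz'.2⟩]

end Doubled

/-! ### Forward direction: `L` bounded implies `L[I]` bounded (join side) -/

namespace Doubled

attribute [local instance] Classical.propDecidable

variable {L : Type u} [Lattice L] {b a : L}

/-- `σ₀` preserves the `D_k` hierarchy. -/
lemma sec0_mem_dset : ∀ (k : ℕ) (u : L), u ∈ Dset L k →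
    (sec0 u : Doubled L b a) ∈ Dset (Doubled L b a) k := by
  intro k
  induction k with
  | zero =>
    intro u hu A s hl hps
    have hl' := isLUB_image_proj hl
    have hps' : u ≤ proj s := hps.1
    obtain ⟨w, hw, huw⟩ := hu (A.image proj) (proj s) hl' hps'
    rw [Finset.mem_image] at hw
    obtain ⟨x, hx, rfl⟩ := hw
    exact ⟨x, hx, sec0_le_iff.mpr huw⟩
  | succ k ih =>
    intro u hu A s hl hps hnt
    have hl' := isLUB_image_proj hl
    have hps' : u ≤ proj s := hps.1
    have hnt' : ∀ w ∈ A.image proj, ¬ u ≤ w := by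
      intro w hw
      rw [Finset.mem_image] at hw
      obtain ⟨x, hx, rfl⟩ := hw
      intro hle
      exact hnt x hx (sec0_le_iff.mpr hle)
    obtain ⟨W, t, hWD, hWref, hlubW, hut⟩ := hu (A.image proj) (proj s) hl' hps' hnt'
    refine ⟨W.image sec0, sec0 t, ?_, ?_, isLUB_image_sec0 hlubW, sec0_mono hut⟩
    · intro y hy
      rw [Finset.coe_image] at hy
      obtain ⟨w, hw, rfl⟩ := hy
      exact ih w (hWD hw)
    · intro y hy
      rw [Finset.mem_image] at hy
      obtain ⟨w, hw, rfl⟩ := hy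
      obtain ⟨w', hw', hww'⟩ := hWref w hw
      rw [Finset.mem_image] at hw'
      obtain ⟨x, hx, rfl⟩ := hw'
      exact ⟨x, hx, sec0_le_iff.mpr hww'⟩

lemma sec0_mem_dfull {u : L} (hu : u ∈ DFull L) :
    (sec0 u : Doubled L b a) ∈ DFull (Doubled L b a) := by
  obtain ⟨k, hk⟩ := mem_dfull.mp hu
  exact dset_subset_dfull k (sec0_mem_dset k u hk)

end Doubled

namespace Doubled

attribute [local instance] Classical.propDecidable

variable {L : Type u} [Lattice L] {b a : L}

lemma bone_mem_dfull [Finite L] (hba : b ≤ a) (hL : DFull L = Set.univ) :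
    bone hba ∈ DFull (Doubled L b a) := by
  apply mem_dfull_of_covers
  intro A s hl hps hnt
  have hbs : b ≤ proj s := hps.1
  by_cases hsI : proj s ∈ Set.Icc b a
  · -- the lub is in the interval: the cover is necessarily trivial
    exfalso
    have hs2 : s.1.2 = true := Bool.eq_true_of_true_le (hps.2 ⟨le_rfl, hba⟩ hsI)
    by_cases hY : ∃ y ∈ A, y.1.1 ∈ Set.Icc b a ∧ y.1.2 = true
    · obtain ⟨y, hy, hyI, hyb⟩ := hY
      exact hnt y hy ((bone_le_iff hba).mpr ⟨hyI.1, fun _ => hyb⟩)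
    · push_neg at hY
      have hub : (sec0 (proj s) : Doubled L b a) ∈ upperBounds (↑A : Set (Doubled L b a)) := by
        intro y hy
        refine ⟨(hl.1 hy).1, fun hyI _ => ?_⟩
        have : y.1.2 = false := Bool.not_eq_true _ |>.mp (hY y hy hyI)
        rw [this]
        exact Bool.false_le _
      have hle := hl.2 hub
      have h2 := hle.2 hsI hsI
      rw [hs2] at h2
      have hfalse : (sec0 (proj s) : Doubled L b a).1.2 = false := rfl
      rw [hfalse] at h2
      exact absurd h2 (by decide)
  · have hsa : ¬ proj s ≤ a := fun h => hsI ⟨hbs, h⟩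
    have hx0 : ∃ x₀ ∈ A, ¬ proj x₀ ≤ a := by
      by_contra h
      push_neg at h
      apply hsa
      have hub : a ∈ upperBounds (↑(A.image proj) : Set L) := by
        rintro w hw
        rw [Finset.coe_image] at hw
        obtain ⟨x, hx, rfl⟩ := hw
        exact h x hx
      exact (isLUB_image_proj hl).2 hub
    obtain ⟨x₀, hx₀A, hx₀a⟩ := hx0
    by_cases hx1 : ∃ x₁ ∈ A, b ≤ proj x₁
    · obtain ⟨x₁, hx₁A, hbx₁⟩ := hx1
      refine ⟨({proj x₁, proj x₀} : Finset L).image sec0, sec0 (proj x₁ ⊔ proj x₀),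
        ?_, ?_, ?_, ?_⟩
      · intro y hy
        rw [Finset.coe_image] at hy
        obtain ⟨w, hw, rfl⟩ := hy
        exact sec0_mem_dfull (hL ▸ Set.mem_univ w)
      · intro y hy
        rw [Finset.mem_image] at hy
        obtain ⟨w, hw, rfl⟩ := hy
        rw [Finset.mem_insert, Finset.mem_singleton] at hw
        rcases hw with rfl | rfl
        · exact ⟨x₁, hx₁A, sec0_le_iff.mpr le_rfl⟩
        · exact ⟨x₀, hx₀A, sec0_le_iff.mpr le_rfl⟩
      · apply isLUB_image_sec0
        rw [Finset.coe_insert, Finset.coe_singleton]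
        exact isLUB_pair
      · refine (bone_le_iff hba).mpr ⟨hbx₁.trans le_sup_left, fun hmem => ?_⟩
        exact absurd (le_sup_right.trans hmem.2) hx₀a
    · push_neg at hx1
      have hntL : ∀ w ∈ A.image proj, ¬ b ≤ w := by
        intro w hw
        rw [Finset.mem_image] at hw
        obtain ⟨x, hx, rfl⟩ := hw
        exact hx1 x hx
      have hbD : b ∈ DFull L := hL ▸ Set.mem_univ b
      obtain ⟨N, hN⟩ := exists_stab L
      have hbN : b ∈ Dset L (N + 1) := dset_succ N (hN hbD)
      obtain ⟨W, tW, hWD, hWref, hlubW, hbtW⟩ :=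
        hbN (A.image proj) (proj s) (isLUB_image_proj hl) hbs hntL
      refine ⟨(W ∪ {proj x₀}).image sec0, sec0 (tW ⊔ proj x₀), ?_, ?_, ?_, ?_⟩
      · intro y hy
        rw [Finset.coe_image] at hy
        obtain ⟨w, hw, rfl⟩ := hy
        rw [Finset.mem_coe, Finset.mem_union, Finset.mem_singleton] at hw
        rcases hw with hw | rfl
        · exact sec0_mem_dfull (dset_subset_dfull N (hWD (Finset.mem_coe.mpr hw)))
        · exact sec0_mem_dfull (hL ▸ Set.mem_univ _)
      · intro y hy
        rw [Finset.mem_image] at hy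
        obtain ⟨w, hw, rfl⟩ := hy
        rw [Finset.mem_union, Finset.mem_singleton] at hw
        rcases hw with hw | rfl
        · obtain ⟨w', hw', hww'⟩ := hWref w hw
          rw [Finset.mem_image] at hw'
          obtain ⟨x, hx, rfl⟩ := hw'
          exact ⟨x, hx, sec0_le_iff.mpr hww'⟩
        · exact ⟨x₀, hx₀A, sec0_le_iff.mpr le_rfl⟩
      · apply isLUB_image_sec0
        rw [Finset.coe_union, Finset.coe_singleton]
        exact IsLUB.union hlubW isLUB_singleton
      · refine (bone_le_iff hba).mpr ⟨hbtW.trans le_sup_left, fun hmem => ?_⟩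
        exact absurd (le_sup_right.trans hmem.2) hx₀a

/-- `DFull` is closed under binary joins (generic, finite lattice). -/
lemma dfull_sup_closed {β : Type*} [Lattice β] [Finite β] {p q x : β}
    (hp : p ∈ DFull β) (hq : q ∈ DFull β) (hx : IsLUB ({p, q} : Set β) x) :
    x ∈ DFull β := by
  classical
  obtain ⟨N, hN⟩ := exists_stab β
  apply mem_dfull_of_covers
  intro A s hl hxs hnt
  have hpx : p ≤ x := hx.1 (Set.mem_insert _ _)
  have hqx : q ≤ x := hx.1 (Set.mem_insert_of_mem _ rfl)
  have piece : ∀ r : β, r ∈ DFull β → r ≤ x →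
      ∃ (U : Finset β) (t : β), (↑U : Set β) ⊆ DFull β ∧ (∀ u ∈ U, ∃ y ∈ A, u ≤ y) ∧
        IsLUB (↑U : Set β) t ∧ r ≤ t := by
    intro r hrD hrx
    by_cases hr : ∃ y ∈ A, r ≤ y
    · obtain ⟨y, hy, hry⟩ := hr
      refine ⟨{r}, r, ?_, ?_, ?_, le_rfl⟩
      · intro z hz
        rw [Finset.coe_singleton, Set.mem_singleton_iff] at hz
        exact hz ▸ hrD
      · intro u hu
        rw [Finset.mem_singleton] at hu
        exact ⟨y, hy, hu ▸ hry⟩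
      · rw [Finset.coe_singleton]; exact isLUB_singleton
    · push_neg at hr
      have hrN : r ∈ Dset β (N + 1) := dset_succ N (hN hrD)
      obtain ⟨U, t, hUD, hUref, hlubU, hrt⟩ := hrN A s hl (hrx.trans hxs) hr
      exact ⟨U, t, fun z hz => dset_subset_dfull N (hUD hz), hUref, hlubU, hrt⟩
  obtain ⟨Up, tp, hUpD, hUpref, hUplub, hptp⟩ := piece p hp hpx
  obtain ⟨Uq, tq, hUqD, hUqref, hUqlub, hqtq⟩ := piece q hq hqx
  refine ⟨Up ∪ Uq, tp ⊔ tq, ?_, ?_, ?_, ?_⟩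
  · intro z hz
    rw [Finset.coe_union] at hz
    rcases hz with hz | hz
    · exact hUpD hz
    · exact hUqD hz
  · intro u hu
    rw [Finset.mem_union] at hu
    rcases hu with hu | hu
    · exact hUpref u hu
    · exact hUqref u hu
  · rw [Finset.coe_union]
    exact IsLUB.union hUplub hUqlub
  · refine hx.2 ?_
    rintro y (rfl | rfl)
    · exact hptp.trans le_sup_left
    · exact hqtq.trans le_sup_right

/-- Forward direction, join side. -/
theorem dfull_doubled_of_dfull [Finite L] (hba : b ≤ a) (hL : DFull L = Set.univ) :
    DFull (Doubled L b a) = Set.univ := by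
  ext x
  simp only [Set.mem_univ, iff_true]
  rcases x with ⟨⟨v, j⟩, hsub⟩
  rcases j with _ | _
  · exact sec0_mem_dfull (hL ▸ Set.mem_univ v)
  · have hv : v ∈ Set.Icc b a := hsub.resolve_right (by simp)
    have hlub := isLUB_pair_bone hba hv
    exact dfull_sup_closed (sec0_mem_dfull (hL ▸ Set.mem_univ v))
      (bone_mem_dfull hba hL) hlub

end Doubled

/-! ### Backward direction: `L[I]` bounded implies `L` bounded (join side) -/

namespace Doubled

attribute [local instance] Classical.propDecidable

variable {L : Type u} [Lattice L] {b a : L}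

/-- `σ₀` maps the D-relation of `L` into the D-relation of `L[I]`:
strongly minimal covers lift along `σ₀`. -/
lemma drel_sec0 {q p : L} (h : Drel q p) :
    Drel (sec0 q : Doubled L b a) (sec0 p) := by
  obtain ⟨Q, ⟨⟨s, hl, hps⟩, hnt, hanti, hsm⟩, hqQ⟩ := h
  refine ⟨Q.image sec0, ⟨⟨sec0 s, isLUB_image_sec0 hl, sec0_mono hps⟩, ?_, ?_, ?_⟩,
    Finset.mem_image_of_mem _ hqQ⟩
  · intro y hy
    rw [Finset.mem_image] at hy
    obtain ⟨x, hx, rfl⟩ := hy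
    intro hle
    exact hnt x hx (sec0_le_sec0_iff.mp hle)
  · intro y hy z hz hne hle
    rw [Finset.coe_image] at hy hz
    obtain ⟨x, hx, rfl⟩ := hy
    obtain ⟨x', hx', rfl⟩ := hz
    have hxx : x ≠ x' := fun he => hne (he ▸ rfl)
    exact hanti hx hx' hxx (sec0_le_sec0_iff.mp hle)
  · intro U hUcov hUref
    obtain ⟨t, hlt, hpt⟩ := hUcov
    have hcovL : CovSet p (U.image proj) := ⟨proj t, isLUB_image_proj hlt, hpt.1⟩
    have hrefL : Refines (U.image proj) Q := by
      intro w hw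
      rw [Finset.mem_image] at hw
      obtain ⟨y, hy, rfl⟩ := hw
      obtain ⟨z, hz, hyz⟩ := hUref y hy
      rw [Finset.mem_image] at hz
      obtain ⟨x, hx, rfl⟩ := hz
      exact ⟨x, hx, proj_mono hyz⟩
    have hQsub : Q ⊆ U.image proj := hsm _ hcovL hrefL
    intro y hy
    rw [Finset.mem_image] at hy
    obtain ⟨x, hx, rfl⟩ := hy
    obtain ⟨y', hy', hproj⟩ := Finset.mem_image.mp (hQsub hx)
    obtain ⟨z, hz, hyz⟩ := hUref y' hy'
    rw [Finset.mem_image] at hz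
    obtain ⟨x', hx', rfl⟩ := hz
    have hxx' : x ≤ x' := by
      have := proj_mono hyz
      rw [hproj, proj_sec0] at this
      exact this
    have hxeq : x = x' := by
      by_contra hne
      exact hanti (Finset.mem_coe.mpr hx) (Finset.mem_coe.mpr hx') hne hxx'
    subst hxeq
    have hy'eq : y' = sec0 x := by
      apply Subtype.ext
      apply Prod.ext
      · exact hproj
      · show y'.1.2 = false
        by_cases hxI : x ∈ Set.Icc b a
        · have h1 : y'.1.1 ∈ Set.Icc b a := by rw [show y'.1.1 = x from hproj]; exact hxI
          have h2 : (sec0 x : Doubled L b a).1.1 ∈ Set.Icc b a := hxI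
          have h3 : y'.1.2 ≤ false := hyz.2 h1 h2
          exact le_antisymm h3 (Bool.false_le _)
        · exact bool_eq_false (by rw [show y'.1.1 = x from hproj]; exact hxI)
    rw [← hy'eq]
    exact hy'

/-- Backward direction, join side. -/
theorem dfull_of_dfull_doubled [Finite L]
    (hK : DFull (Doubled L b a) = Set.univ) : DFull L = Set.univ := by
  have hwfK : WellFounded (Drel (α := Doubled L b a)) := drel_wf_of_full hK
  have hwfL : WellFounded (Drel (α := L)) := by
    refine Subrelation.wf (r := InvImage Drel (sec0 : L → Doubled L b a)) ?_
      (InvImage.wf _ hwfK)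
    intro q p h
    exact drel_sec0 h
  exact dfull_univ_of_wf hwfL

end Doubled

/-! ### Transport of `DFull` along order isomorphisms, and duality -/

section Transport

variable {α : Type*} {β : Type*} [PartialOrder α] [PartialOrder β]

lemma isLUB_map_orderIso (e : α ≃o β) {S : Set α} {s : α} (h : IsLUB S s) :
    IsLUB (e '' S) (e s) := by
  constructor
  · rintro y ⟨x, hx, rfl⟩
    exact e.le_iff_le.mpr (h.1 hx)
  · intro z hz
    rw [← e.apply_symm_apply z, e.le_iff_le]
    apply h.2
    intro x hx
    rw [e.le_symm_apply]
    exact hz ⟨x, hx, rfl⟩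

lemma dset_map_orderIso (e : α ≃o β) : ∀ (k : ℕ) (p : α), p ∈ Dset α k → e p ∈ Dset β k := by
  classical
  intro k
  induction k with
  | zero =>
    intro p hp A s hl hps
    have hl' : IsLUB (↑(A.image e.symm) : Set α) (e.symm s) := by
      rw [Finset.coe_image]
      exact isLUB_map_orderIso e.symm hl
    have hps' : p ≤ e.symm s := by
      have := e.symm.monotone hps
      rwa [e.symm_apply_apply] at this
    obtain ⟨x', hx', hpx'⟩ := hp (A.image e.symm) (e.symm s) hl' hps'
    rw [Finset.mem_image] at hx'
    obtain ⟨x, hx, rfl⟩ := hx'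
    refine ⟨x, hx, ?_⟩
    have := e.le_iff_le.mpr hpx'
    rwa [e.apply_symm_apply] at this
  | succ k ih =>
    intro p hp A s hl hps hnt
    have hl' : IsLUB (↑(A.image e.symm) : Set α) (e.symm s) := by
      rw [Finset.coe_image]
      exact isLUB_map_orderIso e.symm hl
    have hps' : p ≤ e.symm s := by
      have := e.symm.monotone hps
      rwa [e.symm_apply_apply] at this
    have hnt' : ∀ x' ∈ A.image e.symm, ¬ p ≤ x' := by
      intro x' hx'
      rw [Finset.mem_image] at hx'
      obtain ⟨x, hx, rfl⟩ := hx'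
      intro hle
      have := e.le_iff_le.mpr hle
      rw [e.apply_symm_apply] at this
      exact hnt x hx this
    obtain ⟨U, t, hUD, hUref, hlubU, hpt⟩ := hp (A.image e.symm) (e.symm s) hl' hps' hnt'
    refine ⟨U.image e, e t, ?_, ?_, ?_, ?_⟩
    · intro y hy
      rw [Finset.coe_image] at hy
      obtain ⟨u, hu, rfl⟩ := hy
      exact ih u (hUD hu)
    · intro y hy
      rw [Finset.mem_image] at hy
      obtain ⟨u, hu, rfl⟩ := hy
      obtain ⟨x', hx', hux'⟩ := hUref u hu
      rw [Finset.mem_image] at hx'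
      obtain ⟨x, hx, rfl⟩ := hx'
      refine ⟨x, hx, ?_⟩
      have := e.le_iff_le.mpr hux'
      rwa [e.apply_symm_apply] at this
    · rw [Finset.coe_image]
      exact isLUB_map_orderIso e hlubU
    · exact e.le_iff_le.mpr hpt
  
lemma dfull_univ_congr (e : α ≃o β) (h : DFull α = Set.univ) : DFull β = Set.univ := by
  ext q
  simp only [Set.mem_univ, iff_true]
  obtain ⟨k, hk⟩ := mem_dfull.mp (h ▸ Set.mem_univ (e.symm q))
  have := dset_map_orderIso e k _ hk
  rw [e.apply_symm_apply] at this
  exact dset_subset_dfull k this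

lemma ddfull_univ_iff (α : Type*) [PartialOrder α] :
    DdFull α = Set.univ ↔ DFull αᵒᵈ = Set.univ := by
  constructor
  · intro h
    ext x
    simp only [Set.mem_univ, iff_true]
    have : OrderDual.ofDual x ∈ DdFull α := h ▸ Set.mem_univ _
    exact this
  · intro h
    ext p
    simp only [Set.mem_univ, iff_true]
    show OrderDual.toDual p ∈ DFull αᵒᵈ
    exact h ▸ Set.mem_univ _

end Transport

namespace Doubled

attribute [local instance] Classical.propDecidable

variable {L : Type u} [Lattice L] {b a : L}

lemma mem_Icc_dual {v : L} :
    OrderDual.toDual v ∈ Set.Icc (OrderDual.toDual a) (OrderDual.toDual b) ↔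
      v ∈ Set.Icc b a := by
  simp only [Set.mem_Icc, OrderDual.toDual_le_toDual, OrderDual.le_toDual,
    OrderDual.toDual_le]
  exact and_comm

/-- The underlying map of the duality `(L[b,a])ᵒᵈ ≅ Lᵒᵈ[a,b]`. -/
noncomputable def dualMap (x : Doubled L b a) :
    Doubled Lᵒᵈ (OrderDual.toDual a) (OrderDual.toDual b) := by
  classical
  exact if h : x.1.1 ∈ Set.Icc b a
    then ⟨(OrderDual.toDual x.1.1, !x.1.2), Or.inl (mem_Icc_dual.mpr h)⟩
    else ⟨(OrderDual.toDual x.1.1, false), Or.inr rfl⟩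

noncomputable def dualMapInv (y : Doubled Lᵒᵈ (OrderDual.toDual a) (OrderDual.toDual b)) :
    Doubled L b a := by
  classical
  exact if h : OrderDual.ofDual y.1.1 ∈ Set.Icc b a
    then ⟨(OrderDual.ofDual y.1.1, !y.1.2), Or.inl h⟩
    else ⟨(OrderDual.ofDual y.1.1, false), Or.inr rfl⟩

@[simp] lemma dualMap_fst (x : Doubled L b a) :
    (dualMap x).1.1 = OrderDual.toDual x.1.1 := by
  by_cases h : x.1.1 ∈ Set.Icc b a
  · rw [show dualMap x = _ from dif_pos h]
  · rw [show dualMap x = _ from dif_neg h]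

lemma dualMap_snd_of_mem {x : Doubled L b a} (h : x.1.1 ∈ Set.Icc b a) :
    (dualMap x).1.2 = !x.1.2 := by
  rw [show dualMap x = _ from dif_pos h]

lemma dualMap_snd_of_not_mem {x : Doubled L b a} (h : x.1.1 ∉ Set.Icc b a) :
    (dualMap x).1.2 = false := by
  rw [show dualMap x = _ from dif_neg h]

@[simp] lemma dualMapInv_fst (y : Doubled Lᵒᵈ (OrderDual.toDual a) (OrderDual.toDual b)) :
    (dualMapInv y).1.1 = OrderDual.ofDual y.1.1 := by
  by_cases h : OrderDual.ofDual y.1.1 ∈ Set.Icc b a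
  · rw [show dualMapInv y = _ from dif_pos h]
  · rw [show dualMapInv y = _ from dif_neg h]

lemma dualMapInv_snd_of_mem {y : Doubled Lᵒᵈ (OrderDual.toDual a) (OrderDual.toDual b)}
    (h : OrderDual.ofDual y.1.1 ∈ Set.Icc b a) : (dualMapInv y).1.2 = !y.1.2 := by
  rw [show dualMapInv y = _ from dif_pos h]

lemma dualMapInv_snd_of_not_mem {y : Doubled Lᵒᵈ (OrderDual.toDual a) (OrderDual.toDual b)}
    (h : OrderDual.ofDual y.1.1 ∉ Set.Icc b a) : (dualMapInv y).1.2 = false := by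
  rw [show dualMapInv y = _ from dif_neg h]

lemma dualMapInv_dualMap (x : Doubled L b a) : dualMapInv (dualMap x) = x := by
  apply Subtype.ext
  apply Prod.ext
  · rw [dualMapInv_fst, dualMap_fst]
    rfl
  · by_cases h : x.1.1 ∈ Set.Icc b a
    · have h1 : OrderDual.ofDual (dualMap x).1.1 ∈ Set.Icc b a := by
        rw [dualMap_fst]; exact h
      rw [dualMapInv_snd_of_mem h1, dualMap_snd_of_mem h, Bool.not_not]
    · have h1 : OrderDual.ofDual (dualMap x).1.1 ∉ Set.Icc b a := by
        rw [dualMap_fst]; exact h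
      rw [dualMapInv_snd_of_not_mem h1]
      exact (bool_eq_false h).symm

lemma dualMap_dualMapInv (y : Doubled Lᵒᵈ (OrderDual.toDual a) (OrderDual.toDual b)) :
    dualMap (dualMapInv y) = y := by
  apply Subtype.ext
  apply Prod.ext
  · rw [dualMap_fst, dualMapInv_fst]
    rfl
  · by_cases h : OrderDual.ofDual y.1.1 ∈ Set.Icc b a
    · have h1 : (dualMapInv y).1.1 ∈ Set.Icc b a := by
        rw [dualMapInv_fst]; exact h
      rw [dualMap_snd_of_mem h1, dualMapInv_snd_of_mem h, Bool.not_not]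
    · have h1 : (dualMapInv y).1.1 ∉ Set.Icc b a := by
        rw [dualMapInv_fst]; exact h
      rw [dualMap_snd_of_not_mem h1]
      have hy : y.1.1 ∈ Set.Icc (OrderDual.toDual a) (OrderDual.toDual b) → False := by
        intro hmem
        exact h (mem_Icc_dual.mp hmem)
      have : y.1.2 = false := y.2.resolve_left hy
      exact this.symm

lemma bool_not_le_not (u v : Bool) : ((!u) ≤ (!v)) ↔ v ≤ u := by
  cases u <;> cases v <;> decide

lemma dualMap_le_iff {x y : Doubled L b a} : dualMap x ≤ dualMap y ↔ y ≤ x := by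
  constructor
  · intro h
    have h1 : y.1.1 ≤ x.1.1 := by
      have := h.1
      rw [dualMap_fst, dualMap_fst] at this
      exact this
    refine ⟨h1, fun hy hx => ?_⟩
    have hx' : (dualMap x).1.1 ∈ Set.Icc (OrderDual.toDual a) (OrderDual.toDual b) := by
      rw [dualMap_fst]; exact mem_Icc_dual.mpr hx
    have hy' : (dualMap y).1.1 ∈ Set.Icc (OrderDual.toDual a) (OrderDual.toDual b) := by
      rw [dualMap_fst]; exact mem_Icc_dual.mpr hy
    have h2 := h.2 hx' hy'
    rw [dualMap_snd_of_mem hx, dualMap_snd_of_mem hy] at h2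
    exact (bool_not_le_not _ _).mp h2
  · intro h
    refine ⟨?_, fun hx' hy' => ?_⟩
    · rw [dualMap_fst, dualMap_fst]
      exact h.1
    · have hx : x.1.1 ∈ Set.Icc b a := by
        rw [dualMap_fst] at hx'
        exact mem_Icc_dual.mp hx'
      have hy : y.1.1 ∈ Set.Icc b a := by
        rw [dualMap_fst] at hy'
        exact mem_Icc_dual.mp hy'
      rw [dualMap_snd_of_mem hx, dualMap_snd_of_mem hy]
      exact (bool_not_le_not _ _).mpr (h.2 hy hx)

/-- The duality `(L[b,a])ᵒᵈ ≅ Lᵒᵈ[a,b]`. -/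
noncomputable def dualIso :
    (Doubled L b a)ᵒᵈ ≃o Doubled Lᵒᵈ (OrderDual.toDual a) (OrderDual.toDual b) where
  toFun x := dualMap (OrderDual.ofDual x)
  invFun y := OrderDual.toDual (dualMapInv y)
  left_inv x := by simp [dualMapInv_dualMap]
  right_inv y := by simp [dualMap_dualMapInv]
  map_rel_iff' {x y} := by
    show dualMap (OrderDual.ofDual x) ≤ dualMap (OrderDual.ofDual y) ↔ x ≤ y
    rw [dualMap_le_iff]
    rfl

end Doubled

/-! ### The main theorem -/

/-- A finite lattice is bounded if and only if the doubling of
any of its intervals is bounded. -/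
theorem bounded_iff_doubled_bounded
    (L : Type u) [Lattice L] [Finite L] (b a : L) (hba : b ≤ a) :
    IsBoundedLat L ↔ IsBoundedLat (Doubled L b a) := by
  have hba' : OrderDual.toDual a ≤ OrderDual.toDual b := OrderDual.toDual_le_toDual.mpr hba
  haveI : Finite Lᵒᵈ := ‹Finite L›
  constructor
  · rintro ⟨h1, h2⟩
    constructor
    · exact Doubled.dfull_doubled_of_dfull hba h1
    · rw [ddfull_univ_iff]
      refine dfull_univ_congr (Doubled.dualIso (L := L) (b := b) (a := a)).symm ?_
      exact Doubled.dfull_doubled_of_dfull hba' ((ddfull_univ_iff L).mp h2)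
  · rintro ⟨h1, h2⟩
    constructor
    · exact Doubled.dfull_of_dfull_doubled h1
    · rw [ddfull_univ_iff]
      refine Doubled.dfull_of_dfull_doubled (L := Lᵒᵈ)
        (b := OrderDual.toDual a) (a := OrderDual.toDual b) ?_
      exact dfull_univ_congr (Doubled.dualIso (L := L) (b := b) (a := a))
        ((ddfull_univ_iff _).mp h2)

end FreeLatticePaper
end

section
/- Let S be a finite partially defined lattice in which only joins are defined (no nontrivial meets are defined), and let R₋ be a set of pairs (u,v) ∈ S × S with u ≰ v in S. Then there is a finite distributive lattice D and a PDL homomorphism h : S → D such that h(u) ≰ h(v) for every (u,v) ∈ R₋; consequently S (with R₋) occurs in a free lattice. -/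
open FirstOrder

namespace FreeLatticePaper

universe u v w u' v'

/-- A lattice `F` is free on a subset `X ⊆ F` if every map from `X` to a lattice
extends uniquely to a lattice homomorphism. -/
def IsFreeOn (F : Type u) [Lattice F] (X : Set F) : Prop :=
  ∀ (L : Type v) [Lattice L] (f : X → L), ∃! g : LatticeHom F L, ∀ x : X, g x = f x

/-- An `S`-homomorphism: a PDL homomorphism that moreover respects the
negations in `Rneg`, i.e. `h u ≰ h v` for every `(u, v) ∈ Rneg`. -/
def PDLOps.IsSHom {α : Type u} [PartialOrder α] (P : PDLOps α) (Rneg : Set (α × α))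
    {β : Type v} [PartialOrder β] (h : α → β) : Prop :=
  P.IsHom h ∧ ∀ p ∈ Rneg, ¬ h p.1 ≤ h p.2


/-! ### Auxiliary development: a free lattice as a quotient of lattice terms -/

namespace FLAux

universe x y

/-- Lattice terms over a set `X` of generators. -/
inductive Tm (X : Type x) : Type x
  | var : X → Tm X
  | sup : Tm X → Tm X → Tm X
  | inf : Tm X → Tm X → Tm X

variable {X : Type x}

/-- Evaluation of a term in a lattice, given values for the generators. -/
def Tm.eval {L : Type y} [Lattice L] (f : X → L) : Tm X → L
  | .var a => f a
  | .sup s t => s.eval f ⊔ t.eval f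
  | .inf s t => s.eval f ⊓ t.eval f

/-- Semantic inequality of terms: `s ≤ t` under every valuation in every lattice
(in universe `y`). -/
def Tm.Le (s t : Tm X) : Prop :=
  ∀ (L : Type y) [Lattice L] (f : X → L), s.eval f ≤ t.eval f

theorem Tm.Le.rfl {s : Tm X} : Tm.Le.{x, y} s s := fun _ _ _ => le_rfl

theorem Tm.Le.trans {s t r : Tm X} (h₁ : Tm.Le.{x, y} s t) (h₂ : Tm.Le.{x, y} t r) :
    Tm.Le.{x, y} s r := fun L _ f => le_trans (h₁ L f) (h₂ L f)

/-- Semantic equivalence of terms. -/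
def FLSetoid (X : Type x) : Setoid (Tm X) where
  r s t := Tm.Le.{x, y} s t ∧ Tm.Le.{x, y} t s
  iseqv := ⟨fun _ => ⟨Tm.Le.rfl, Tm.Le.rfl⟩, fun h => ⟨h.2, h.1⟩,
    fun h₁ h₂ => ⟨h₁.1.trans h₂.1, h₂.2.trans h₁.2⟩⟩

/-- The free lattice on `X` (relative to lattices in universe `y`). -/
def FL (X : Type x) : Type x := Quotient (FLSetoid.{x, y} X)

/-- The class of a term in the free lattice. -/
def FL.mk (t : Tm X) : FL.{x, y} X := Quotient.mk (FLSetoid.{x, y} X) t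

instance : Lattice (FL.{x, y} X) where
  le := Quotient.lift₂ Tm.Le.{x, y} (fun _ _ _ _ h₁ h₂ =>
    propext ⟨fun h => (h₁.2.trans h).trans h₂.1, fun h => (h₁.1.trans h).trans h₂.2⟩)
  le_refl := fun z => Quotient.inductionOn z (fun _ => Tm.Le.rfl)
  le_trans := fun z₁ z₂ z₃ => Quotient.inductionOn₃ z₁ z₂ z₃
    (fun _ _ _ h₁ h₂ => Tm.Le.trans h₁ h₂)
  le_antisymm := fun z₁ z₂ => Quotient.inductionOn₂ z₁ z₂
    (fun _ _ h₁ h₂ => Quotient.sound ⟨h₁, h₂⟩)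
  sup := Quotient.map₂ Tm.sup (fun _ _ h₁ _ _ h₂ =>
    ⟨fun L _ f => sup_le_sup (h₁.1 L f) (h₂.1 L f),
     fun L _ f => sup_le_sup (h₁.2 L f) (h₂.2 L f)⟩)
  le_sup_left := fun z₁ z₂ => Quotient.inductionOn₂ z₁ z₂
    (fun _ _ => fun _ _ _ => le_sup_left)
  le_sup_right := fun z₁ z₂ => Quotient.inductionOn₂ z₁ z₂
    (fun _ _ => fun _ _ _ => le_sup_right)
  sup_le := fun z₁ z₂ z₃ => Quotient.inductionOn₃ z₁ z₂ z₃
    (fun _ _ _ h₁ h₂ => fun L _ f => sup_le (h₁ L f) (h₂ L f))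
  inf := Quotient.map₂ Tm.inf (fun _ _ h₁ _ _ h₂ =>
    ⟨fun L _ f => inf_le_inf (h₁.1 L f) (h₂.1 L f),
     fun L _ f => inf_le_inf (h₁.2 L f) (h₂.2 L f)⟩)
  inf_le_left := fun z₁ z₂ => Quotient.inductionOn₂ z₁ z₂
    (fun _ _ => fun _ _ _ => inf_le_left)
  inf_le_right := fun z₁ z₂ => Quotient.inductionOn₂ z₁ z₂
    (fun _ _ => fun _ _ _ => inf_le_right)
  le_inf := fun z₁ z₂ z₃ => Quotient.inductionOn₃ z₁ z₂ z₃
    (fun _ _ _ h₁ h₂ => fun L _ f => le_inf (h₁ L f) (h₂ L f))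

theorem FL.mk_le_mk {s t : Tm X} : (FL.mk.{x, y} s ≤ FL.mk.{x, y} t) ↔ Tm.Le.{x, y} s t :=
  Iff.rfl

theorem FL.mk_sup_mk (s t : Tm X) :
    (FL.mk.{x, y} s ⊔ FL.mk.{x, y} t) = FL.mk.{x, y} (s.sup t) := rfl

/-- Iterated formal joins of generators over a base term. -/
def supList (l : List X) (b : Tm X) : Tm X :=
  l.foldr (fun a t => (Tm.var a).sup t) b

/-- Iterated formal meets of generators over a base term. -/
def infList (l : List X) (b : Tm X) : Tm X :=
  l.foldr (fun a t => (Tm.var a).inf t) b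

section EvalLemmas

variable {L : Type y} [Lattice L] (f : X → L)

theorem le_eval_supList {a : X} {l : List X} (ha : a ∈ l) (b : Tm X) :
    f a ≤ (supList l b).eval f := by
  induction l with
  | nil => cases ha
  | cons c l ih =>
    rcases List.mem_cons.mp ha with h | h
    · subst h; exact le_sup_left
    · exact le_trans (ih h) le_sup_right

theorem eval_le_eval_supList (l : List X) (b : Tm X) :
    b.eval f ≤ (supList l b).eval f := by
  induction l with
  | nil => exact le_rfl
  | cons c l ih => exact le_trans ih le_sup_right

theorem eval_supList_le {l : List X} {b : Tm X} {c : L}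
    (h : ∀ a ∈ l, f a ≤ c) (hb : b.eval f ≤ c) : (supList l b).eval f ≤ c := by
  induction l with
  | nil => exact hb
  | cons d l ih =>
    exact sup_le (h d List.mem_cons_self) (ih fun a ha => h a (List.mem_cons_of_mem d ha))

theorem eval_infList_le {a : X} {l : List X} (ha : a ∈ l) (b : Tm X) :
    (infList l b).eval f ≤ f a := by
  induction l with
  | nil => cases ha
  | cons c l ih =>
    rcases List.mem_cons.mp ha with h | h
    · subst h; exact inf_le_left
    · exact le_trans inf_le_right (ih h)

end EvalLemmas

/-- A formal bottom element: the meet of all generators. -/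
noncomputable def botTm [Fintype X] (x0 : X) : Tm X :=
  infList (Finset.univ : Finset X).toList (Tm.var x0)

theorem eval_botTm_le [Fintype X] (x0 : X) {L : Type y} [Lattice L] (f : X → L) :
    ∀ t : Tm X, (botTm x0).eval f ≤ t.eval f := by
  have hvar : ∀ a : X, (botTm x0).eval f ≤ f a := fun a =>
    eval_infList_le f (by simp [Finset.mem_toList]) _
  intro t
  induction t with
  | var a => exact hvar a
  | sup s t ih₁ ih₂ => exact le_trans ih₁ le_sup_left
  | inf s t ih₁ ih₂ => exact le_inf ih₁ ih₂

/-- The free lattice `FL X` is free on the set of (classes of) generators. -/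
theorem isFreeOn_FL (X : Type x) :
    IsFreeOn.{x, y} (FL.{x, y} X) (Set.range fun a : X => FL.mk.{x, y} (Tm.var a)) := by
  intro L _ f
  let f' : X → L := fun a => f ⟨FL.mk (Tm.var a), Set.mem_range_self a⟩
  refine ⟨{ toFun := Quotient.lift (Tm.eval f')
              (fun s t h => le_antisymm (h.1 L f') (h.2 L f'))
            map_sup' := fun z₁ z₂ => Quotient.inductionOn₂ z₁ z₂ (fun _ _ => Eq.refl _)
            map_inf' := fun z₁ z₂ => Quotient.inductionOn₂ z₁ z₂ (fun _ _ => Eq.refl _) },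
         ?_, ?_⟩
  · rintro ⟨-, a, rfl⟩
    show Tm.eval f' (Tm.var a) = _
    exact congrArg f (Subtype.ext (Eq.refl _))
  · rintro g hg
    have key : ∀ t : Tm X, g (FL.mk t) = Tm.eval f' t := by
      intro t
      induction t with
      | var a =>
        exact (hg ⟨FL.mk (Tm.var a), Set.mem_range_self a⟩).trans
          (congrArg f (Subtype.ext (Eq.refl _)))
      | sup s t ih₁ ih₂ =>
        have h1 : (FL.mk (Tm.sup s t) : FL.{x, y} X) = FL.mk s ⊔ FL.mk t := rfl
        rw [h1, map_sup, ih₁, ih₂]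
        rfl
      | inf s t ih₁ ih₂ =>
        have h1 : (FL.mk (Tm.inf s t) : FL.{x, y} X) = FL.mk s ⊓ FL.mk t := rfl
        rw [h1, map_inf, ih₁, ih₂]
        rfl
    apply DFunLike.ext
    intro z
    refine Quotient.inductionOn z (fun t => ?_)
    exact key t

end FLAux

section ULiftInstances

universe k

instance {β : Type*} [Lattice β] : Lattice (ULift.{k} β) :=
  ULift.down_injective.lattice _ Iff.rfl Iff.rfl (fun _ _ => rfl) (fun _ _ => rfl)

instance {β : Type*} [DistribLattice β] : DistribLattice (ULift.{k} β) :=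
  ULift.down_injective.distribLattice _ Iff.rfl Iff.rfl (fun _ _ => rfl) (fun _ _ => rfl)

end ULiftInstances

/-- A finite PDL in which only joins are defined (all defined
meets being trivial), together with negations `Rneg` consistent with its order,
occurs in a finite distributive lattice, and hence in a free lattice. -/
theorem join_only_pdl_occurs_in_distributive_and_free
    {α : Type u} [PartialOrder α] [Finite α] (P : PDLOps α)
    (hmeets : ∀ (A : Finset α) (c : α), c ∈ P.meetOf A → c ∈ A)
    (Rneg : Set (α × α)) (hR : ∀ p ∈ Rneg, ¬ p.1 ≤ p.2) :
    (∃ (D : Type v) (_ : DistribLattice D), Finite D ∧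
        ∃ h : α → D, P.IsSHom Rneg h) ∧
    (∃ (G : Type v) (_ : Lattice G) (Y : Set G), IsFreeOn G Y ∧
        ∃ h : α → G, P.IsSHom Rneg h) := by
  classical
  obtain ⟨n, ⟨e⟩⟩ := Finite.exists_equiv_fin α
  haveI := Fintype.ofFinite α
  constructor
  · -- Part 1: a finite distributive lattice
    set hD : α → ULift.{v} (Set (Fin n)) := fun a => ULift.up {i | ¬ a ≤ e.symm i} with hhD
    have hmono : Monotone hD := by
      intro a a' haa'
      show (hD a).down ⊆ (hD a').down
      intro i hi
      have hi' : ¬ a ≤ e.symm i := hi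
      exact fun hle => hi' (haa'.trans hle)
    refine ⟨ULift.{v} (Set (Fin n)), inferInstance, inferInstance, hD, ⟨⟨hmono, ?_, ?_⟩, ?_⟩⟩
    · -- joins
      intro A c hc
      have hl := P.isLUB_joinOf A c hc
      constructor
      · rintro _ ⟨b, hb, rfl⟩
        exact hmono (hl.1 hb)
      · intro z hz
        show (hD c).down ⊆ z.down
        intro i hi
        have hi' : ¬ c ≤ e.symm i := hi
        have hex : ∃ b ∈ A, ¬ b ≤ e.symm i := by
          by_contra hall
          push_neg at hall
          exact hi' (hl.2 (fun b hb => hall b hb))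
        obtain ⟨b, hbA, hbi⟩ := hex
        have h1 : i ∈ (hD b).down := hbi
        have h2 : hD b ≤ z := hz (Set.mem_image_of_mem hD (by exact_mod_cast hbA))
        exact h2 h1
    · -- meets
      intro A c hc
      have hg := P.isGLB_meetOf A c hc
      have hcA := hmeets A c hc
      constructor
      · rintro _ ⟨b, hb, rfl⟩
        exact hmono (hg.1 hb)
      · intro z hz
        exact hz (Set.mem_image_of_mem hD (by exact_mod_cast hcA))
    · -- negations
      rintro ⟨u, v⟩ hp hle
      have huv : ¬ u ≤ v := hR _ hp
      have h1 : e v ∈ (hD u).down := by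
        show ¬ u ≤ e.symm (e v)
        simpa using huv
      have h2 : e v ∈ (hD v).down := hle h1
      have h3 : ¬ v ≤ e.symm (e v) := h2
      exact h3 (by simp)
  · -- Part 2: a free lattice
    set X := ULift.{v} (Option (Fin n)) with hX
    set ι0 : α → X := fun a => ULift.up (some (e a)) with hι0
    have hι0inj : Function.Injective ι0 := by
      intro a b hab
      have := congrArg ULift.down hab
      exact e.injective (Option.some.inj this)
    set x0 : X := ULift.up none with hx0
    set sA : α → Finset α := fun a => Finset.univ.filter (fun y => ¬ a ≤ y) with hsA
    have hmem : ∀ a y : α, y ∈ sA a ↔ ¬ a ≤ y := by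
      intro a y
      rw [hsA]
      simp
    set τ : α → FLAux.Tm X := fun a =>
      FLAux.supList ((sA a).toList.map ι0) (FLAux.botTm x0) with hτ
    set hG : α → FLAux.FL X := fun a => FLAux.FL.mk (τ a) with hhG
    have key_le : ∀ a a' : α, (∀ y ∈ sA a, y ∈ sA a') → hG a ≤ hG a' := by
      intro a a' hsub
      refine FLAux.FL.mk_le_mk.mpr ?_
      intro L _ f
      refine FLAux.eval_supList_le f ?_ (FLAux.eval_le_eval_supList f _ _)
      intro g hg
      obtain ⟨y, hy, rfl⟩ := List.mem_map.mp hg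
      exact FLAux.le_eval_supList f
        (List.mem_map.mpr ⟨y, Finset.mem_toList.mpr (hsub y (Finset.mem_toList.mp hy)), rfl⟩) _
    have hmonoG : Monotone hG := by
      intro a a' haa'
      refine key_le a a' (fun y hy => ?_)
      exact (hmem a' y).mpr (fun hle => (hmem a y).mp hy (haa'.trans hle))
    refine ⟨FLAux.FL X, inferInstance,
      Set.range (fun a : X => FLAux.FL.mk (FLAux.Tm.var a)),
      FLAux.isFreeOn_FL X, hG, ⟨⟨hmonoG, ?_, ?_⟩, ?_⟩⟩
    · -- joins
      intro A c hc
      have hl := P.isLUB_joinOf A c hc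
      constructor
      · rintro _ ⟨b, hb, rfl⟩
        exact hmonoG (hl.1 hb)
      · intro z hz
        obtain ⟨t, rfl⟩ := Quotient.exists_rep z
        show FLAux.FL.mk (τ c) ≤ FLAux.FL.mk t
        refine FLAux.FL.mk_le_mk.mpr ?_
        intro L _ f
        refine FLAux.eval_supList_le f ?_ (FLAux.eval_botTm_le x0 f t)
        intro g hg
        obtain ⟨y, hy, rfl⟩ := List.mem_map.mp hg
        have hyc : ¬ c ≤ y := (hmem c y).mp (Finset.mem_toList.mp hy)
        have hex : ∃ b ∈ A, ¬ b ≤ y := by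
          by_contra hall
          push_neg at hall
          exact hyc (hl.2 (fun b hb => hall b hb))
        obtain ⟨b, hbA, hby⟩ := hex
        have h1 : f (ι0 y) ≤ (τ b).eval f :=
          FLAux.le_eval_supList f
            (List.mem_map.mpr ⟨y, Finset.mem_toList.mpr ((hmem b y).mpr hby), rfl⟩) _
        have h2 : hG b ≤ FLAux.FL.mk t := hz (Set.mem_image_of_mem hG (by exact_mod_cast hbA))
        exact h1.trans (FLAux.FL.mk_le_mk.mp h2 L f)
    · -- meets
      intro A c hc
      have hg := P.isGLB_meetOf A c hc
      have hcA := hmeets A c hc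
      constructor
      · rintro _ ⟨b, hb, rfl⟩
        exact hmonoG (hg.1 hb)
      · intro z hz
        exact hz (Set.mem_image_of_mem hG (by exact_mod_cast hcA))
    · -- negations
      rintro ⟨u, v⟩ hp hle
      have huv : ¬ u ≤ v := hR _ hp
      have hTm := FLAux.FL.mk_le_mk.mp hle
      let f : X → ULift Bool := fun g => ULift.up (decide (g = ι0 v))
      have h2 := hTm _ f
      have h3 : f (ι0 v) ≤ (τ u).eval f :=
        FLAux.le_eval_supList f
          (List.mem_map.mpr ⟨v, Finset.mem_toList.mpr ((hmem u v).mpr huv), rfl⟩) _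
      have h4 : (τ v).eval f ≤ ULift.up false := by
        refine FLAux.eval_supList_le f ?_ ?_
        · intro g hg
          obtain ⟨y, hy, rfl⟩ := List.mem_map.mp hg
          have hyv : y ≠ v := fun h => ((hmem v y).mp (Finset.mem_toList.mp hy)) (h ▸ le_rfl)
          have hfy : f (ι0 y) = ULift.up false := by
            have : ι0 y ≠ ι0 v := fun h => hyv (hι0inj h)
            simp [f, this]
          exact hfy ▸ le_rfl
        · refine (FLAux.eval_botTm_le x0 f (FLAux.Tm.var x0)).trans ?_
          have hfx0 : f x0 = ULift.up false := by
            have : x0 ≠ ι0 v := by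
              intro h
              have := congrArg ULift.down h
              rw [hx0, hι0] at this
              exact Option.some_ne_none _ this.symm
            simp [f, this]
          show (FLAux.Tm.var x0).eval f ≤ ULift.up false
          exact le_of_eq hfx0
      have h5 : f (ι0 v) ≤ ULift.up false := (h3.trans h2).trans h4
      have h6 : f (ι0 v) = ULift.up true := by simp [f]
      rw [h6] at h5
      have h7 : (true : Bool) ≤ false := h5
      exact (by decide : ¬ (true : Bool) ≤ false) h7

end FreeLatticePaper
end

section
/- Let K be a lattice generated (under join and meet) by a finite subset Y, and suppose every element of K is the join of a finite set of join-irreducible elements of K. Then K is generated by a finite set Y′ all of whose elements are join irreducible, and Y′ can moreover be chosen so that for any two incomparable y, z ∈ Y′, the meet y ⊓ z does not belong to Y′. -/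
open FirstOrder

namespace FreeLatticePaper

universe u v w u' v'

/-- `a` is join irreducible: `a = b ⊔ c` implies `a = b` or `a = c`. -/
def JoinIrred {L : Type u} [Lattice L] (a : L) : Prop :=
  ∀ b c : L, b ⊔ c = a → b = a ∨ c = a

/-- `a` is meet irreducible: `a = b ⊓ c` implies `a = b` or `a = c`. -/
def MeetIrred {L : Type u} [Lattice L] (a : L) : Prop :=
  ∀ b c : L, b ⊓ c = a → b = a ∨ c = a

private lemma aux_trim {K : Type u} [Lattice K] :
    ∀ n (S : Finset K), S.card = n →
      latticeClosure (↑S : Set K) = Set.univ →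
      (∀ y ∈ S, JoinIrred y) →
      ∃ Y' : Finset K, latticeClosure (↑Y' : Set K) = Set.univ ∧
        (∀ y ∈ Y', JoinIrred y) ∧
        (∀ y ∈ Y', ∀ z ∈ Y', ¬ y ≤ z → ¬ z ≤ y → y ⊓ z ∉ Y') := by
  intro n
  induction n using Nat.strong_induction_on with
  | _ n ih =>
    classical
    intro S hcard hgen hji
    by_cases hgood : ∀ y ∈ S, ∀ z ∈ S, ¬ y ≤ z → ¬ z ≤ y → y ⊓ z ∉ S
    · exact ⟨S, hgen, hji, hgood⟩
    · push_neg at hgood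
      obtain ⟨y, hy, z, hz, hyz, hzy, hm⟩ := hgood
      set m := y ⊓ z with hmdef
      have hmy : m ≠ y := by intro h; exact hyz (le_trans h.ge inf_le_right)
      have hmz : m ≠ z := by intro h; exact hzy (le_trans h.ge inf_le_left)
      have hme : m ∈ S := hm
      set S' := S.erase m with hS'
      have hyS' : y ∈ S' := Finset.mem_erase.mpr ⟨(Ne.symm hmy), hy⟩
      have hzS' : z ∈ S' := Finset.mem_erase.mpr ⟨(Ne.symm hmz), hz⟩
      have hsub : (↑S : Set K) ⊆ latticeClosure (↑S' : Set K) := by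
        intro a ha
        by_cases ham : a = m
        · subst ham
          exact isSublattice_latticeClosure.infClosed
            (subset_latticeClosure hyS') (subset_latticeClosure hzS')
        · exact subset_latticeClosure (Finset.mem_erase.mpr ⟨ham, ha⟩)
      have hgen' : latticeClosure (↑S' : Set K) = Set.univ := by
        have := latticeClosure_mono hsub
        rw [latticeClosure_idem] at this
        rw [hgen] at this
        exact Set.eq_univ_of_univ_subset this
      have hcard' : S'.card < n := by
        rw [← hcard]
        exact Finset.card_erase_lt_of_mem hme
      exact ih S'.card hcard' S' rfl hgen' fun a ha => hji a (Finset.mem_of_mem_erase ha)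

/-- A finitely generated lattice in which every element is a
finite join of join irreducibles is generated by a finite set of join
irreducibles which contains no meet of two of its incomparable members. -/
theorem fg_lattice_generated_by_join_irreducibles
    (K : Type u) [Lattice K] (Y : Finset K)
    (hgen : latticeClosure (↑Y : Set K) = Set.univ)
    (hji : ∀ a : K, ∃ T : Finset K, (∀ t ∈ T, JoinIrred t) ∧
      ∃ hT : T.Nonempty, T.sup' hT id = a) :
    ∃ Y' : Finset K, latticeClosure (↑Y' : Set K) = Set.univ ∧
      (∀ y ∈ Y', JoinIrred y) ∧
      (∀ y ∈ Y', ∀ z ∈ Y', ¬ y ≤ z → ¬ z ≤ y → y ⊓ z ∉ Y') := by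
  classical
  choose T hTji hTne hTsup using hji
  set S : Finset K := Y.biUnion T with hS
  have hSji : ∀ y ∈ S, JoinIrred y := by
    intro a ha
    obtain ⟨y, _, hat⟩ := Finset.mem_biUnion.mp ha
    exact hTji y a hat
  have hsub : (↑Y : Set K) ⊆ latticeClosure (↑S : Set K) := by
    intro a ha
    have hTS : ∀ t ∈ T a, t ∈ latticeClosure (↑S : Set K) := fun t ht =>
      subset_latticeClosure (Finset.mem_biUnion.mpr ⟨a, ha, ht⟩)
    rw [← hTsup a]
    exact isSublattice_latticeClosure.supClosed.finsetSup'_mem (hTne a) hTS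
  have hgenS : latticeClosure (↑S : Set K) = Set.univ := by
    have := latticeClosure_mono hsub
    rw [latticeClosure_idem, hgen] at this
    exact Set.eq_univ_of_univ_subset this
  exact aux_trim S.card S rfl hgenS hSji

end FreeLatticePaper
end

section
/- Let n ≥ 3, let F be a lattice free on an n-element set, and let K be a finitely generated lattice containing F as an elementary substructure with respect to the first-order language of lattices. If D(K) = K (i.e., K is lower bounded), then K = F; in particular K is isomorphic to the free lattice on n generators. -/
open FirstOrder

namespace FreeLatticePaper

universe u v w u' v'

/-- Function symbols of the language of lattices: two binary symbols. -/
def latFuncs : ℕ → Type := fun n =>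
  match n with
  | 2 => Fin 2
  | _ => Empty

/-- The first-order language of lattices: exactly two binary function symbols
(join and meet) and no relation symbols. -/
def latticeLang : FirstOrder.Language := ⟨latFuncs, fun _ => Empty⟩

/-- Every lattice is a structure for the language of lattices, interpreting the
first binary symbol as join and the second as meet. -/
instance latticeStructure (L : Type*) [Lattice L] : latticeLang.Structure L where
  funMap {n} f x :=
    match n, f with
    | 2, ⟨0, _⟩ => x 0 ⊔ x 1
    | 2, ⟨1, _⟩ => x 0 ⊓ x 1
    | 2, ⟨_ + 2, h⟩ => absurd h (by omega)
    | 0, f => Empty.elim f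
    | 1, f => Empty.elim f
    | _ + 3, f => Empty.elim f
  RelMap {n} r _ := Empty.elim r

/- ===================== Auxiliary development ===================== -/

open FirstOrder.Language

section LatticeAux

variable {K : Type*} [Lattice K]

/-- Join of a finite set, valued in `WithBot K` (so that the empty set is allowed). -/
def supb (A : Finset K) : WithBot K := A.sup (fun a => (a : WithBot K))

lemma isLUB_sup' (A : Finset K) (hA : A.Nonempty) : IsLUB (↑A : Set K) (A.sup' hA id) := by
  constructor
  · intro x hx
    exact Finset.le_sup' id (by exact_mod_cast hx)
  · intro b hb
    exact Finset.sup'_le _ _ fun a ha => hb (by exact_mod_cast ha)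

lemma coe_le_supb {A : Finset K} (hA : A.Nonempty) (x : K) :
    (x : WithBot K) ≤ supb A ↔ x ≤ A.sup' hA id := by
  have h : ((A.sup' hA id : K) : WithBot K) = supb A := by
    simpa [supb, Function.comp] using Finset.coe_sup' hA (id : K → K)
  rw [← h, WithBot.coe_le_coe]

lemma nonempty_of_coe_le_supb {A : Finset K} {x : K} (h : (x : WithBot K) ≤ supb A) :
    A.Nonempty := by
  rcases A.eq_empty_or_nonempty with rfl | hA
  · simp [supb] at h
  · exact hA

lemma mem_D0_iff {p : K} :
    p ∈ Dset K 0 ↔ (∀ a b : K, p ≤ a ⊔ b → p ≤ a ∨ p ≤ b) ∧ ∃ a : K, ¬ p ≤ a := by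
  classical
  constructor
  · intro hp
    have hp' : JoinPrimeIn K p := hp
    constructor
    · intro a b hab
      obtain ⟨x, hx, hpx⟩ := hp' ({a, b} : Finset K) (a ⊔ b) (by simpa using isLUB_pair) hab
      rcases Finset.mem_insert.1 hx with rfl | hx
      · exact Or.inl hpx
      · exact Or.inr (Finset.mem_singleton.1 hx ▸ hpx)
    · by_contra h
      push_neg at h
      obtain ⟨a, ha, -⟩ := hp' ∅ p ⟨fun x hx => absurd hx (by simp), fun b _ => h b⟩ le_rfl
      exact absurd ha (by simp)
  · rintro ⟨hbin, a0, ha0⟩ A s hlub hle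
    rcases A.eq_empty_or_nonempty with rfl | hA
    · have hs : s ≤ a0 := hlub.2 (fun x hx => absurd hx (by simp))
      exact absurd (hle.trans hs) ha0
    · have hs : s = A.sup' hA id := hlub.unique (isLUB_sup' A hA)
      rw [hs] at hle
      clear hs hlub
      induction hA using Finset.Nonempty.cons_induction with
      | singleton a => exact ⟨a, by simp, by simpa using hle⟩
      | cons a A ha hA ih =>
          rw [Finset.sup'_cons hA] at hle
          rcases hbin _ _ hle with h | h
          · exact ⟨a, Finset.mem_cons_self a A, h⟩
          · obtain ⟨x, hx, hpx⟩ := ih h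
            exact ⟨x, Finset.mem_cons_of_mem hx, hpx⟩

lemma Dset_subset_succ : ∀ k : ℕ, Dset K k ⊆ Dset K (k + 1)
  | 0 => by
    intro p hp A s hlub hle hnt
    obtain ⟨a, ha, hpa⟩ := (hp : JoinPrimeIn K p) A s hlub hle
    exact absurd hpa (hnt a ha)
  | (k + 1) => by
    intro p hp A s hlub hle hnt
    obtain ⟨U, t, hU, href, hlubU, hpt⟩ := hp A s hlub hle hnt
    exact ⟨U, t, fun u hu => Dset_subset_succ k (hU hu), href, hlubU, hpt⟩

lemma refine_cover {k : ℕ} {u : K} (hu : u ∈ Dset K k) {A : Finset K} (hA : A.Nonempty)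
    (hnt : ∀ a ∈ A, ¬ u ≤ a) (hle : (u : WithBot K) ≤ supb A) :
    ∃ V : Finset K, (↑V : Set K) ⊆ Dset K k ∧ (∀ x ∈ V, ∃ a ∈ A, x ≤ a) ∧
      (u : WithBot K) ≤ supb V := by
  cases k with
  | zero =>
      obtain ⟨a, ha, hua⟩ :=
        (hu : JoinPrimeIn K u) A _ (isLUB_sup' A hA) ((coe_le_supb hA u).1 hle)
      exact absurd hua (hnt a ha)
  | succ k =>
      obtain ⟨U, t, hUD, href, hlubU, hut⟩ :=
        hu A _ (isLUB_sup' A hA) ((coe_le_supb hA u).1 hle) hnt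
      have hUne : U.Nonempty := by
        rcases U.eq_empty_or_nonempty with rfl | h
        · obtain ⟨a, ha⟩ := hA
          have hta : t ≤ a := hlubU.2 (fun x hx => absurd hx (by simp))
          exact absurd (hut.trans hta) (hnt a ha)
        · exact h
      have ht : t = U.sup' hUne id := hlubU.unique (isLUB_sup' U hUne)
      exact ⟨U, fun x hx => Dset_subset_succ k (hUD hx), href,
        (coe_le_supb hUne u).2 (ht ▸ hut)⟩

/-- The binary version of membership in `Dset K (k+1)`. -/
def BIN (k : ℕ) (p : K) : Prop :=
  ∀ a b : K, p ≤ a ⊔ b → ¬ p ≤ a → ¬ p ≤ b →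
    ∃ U : Finset K, (↑U : Set K) ⊆ Dset K k ∧ (∀ u ∈ U, u ≤ a ∨ u ≤ b) ∧
      (p : WithBot K) ≤ supb U

lemma BIN_refine {k : ℕ} {p : K} (hbin : BIN k p) :
    ∀ (n : ℕ) (A : Finset K), A.card ≤ n → (∀ a ∈ A, ¬ p ≤ a) →
      (p : WithBot K) ≤ supb A →
      ∃ U : Finset K, (↑U : Set K) ⊆ Dset K k ∧ (∀ u ∈ U, ∃ a ∈ A, u ≤ a) ∧
        (p : WithBot K) ≤ supb U := by
  intro n
  induction n with
  | zero =>
      intro A hcard _ hle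
      have hAe : A = ∅ := Finset.card_eq_zero.1 (Nat.le_zero.1 hcard)
      subst hAe
      simp [supb] at hle
  | succ n ih =>
      intro A hcard hnt hle
      classical
      have hA : A.Nonempty := nonempty_of_coe_le_supb hle
      obtain ⟨a₁, ha₁⟩ := hA
      have hins : insert a₁ (A.erase a₁) = A := Finset.insert_erase ha₁
      have hsplit : supb A = (a₁ : WithBot K) ⊔ supb (A.erase a₁) := by
        conv_lhs => rw [← hins]
        simp [supb, Finset.sup_insert]
      rcases (A.erase a₁).eq_empty_or_nonempty with hA'e | hA'ne
      · have h1 : supb A = (a₁ : WithBot K) := by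
          rw [hsplit, hA'e]
          simp [supb]
        rw [h1] at hle
        exact absurd (by exact_mod_cast hle) (hnt a₁ ha₁)
      · by_cases hpb : (p : WithBot K) ≤ supb (A.erase a₁)
        · obtain ⟨U, h1, h2, h3⟩ := ih (A.erase a₁)
            (by have := Finset.card_erase_of_mem ha₁; omega)
            (fun a ha => hnt a (Finset.erase_subset _ _ ha)) hpb
          exact ⟨U, h1,
            fun u hu => (h2 u hu).imp (fun a h => ⟨Finset.erase_subset _ _ h.1, h.2⟩), h3⟩
        · have hsupb' : supb (A.erase a₁) = (((A.erase a₁).sup' hA'ne id : K) : WithBot K) := by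
            simpa [supb, Function.comp] using (Finset.coe_sup' hA'ne (id : K → K)).symm
          have hps : p ≤ a₁ ⊔ (A.erase a₁).sup' hA'ne id := by
            have h' : (p : WithBot K) ≤ (((a₁ ⊔ (A.erase a₁).sup' hA'ne id : K)) : WithBot K) := by
              rw [WithBot.coe_sup]
              rw [hsplit, hsupb'] at hle
              exact hle
            exact_mod_cast h'
          have hpa₁ : ¬ p ≤ a₁ := hnt a₁ ha₁
          have hps' : ¬ p ≤ (A.erase a₁).sup' hA'ne id := fun h =>
            hpb (by rw [hsupb']; exact_mod_cast h)
          obtain ⟨U₀, hU₀D, hor, hple⟩ := hbin a₁ _ hps hpa₁ hps'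
          have hg : ∀ u ∈ U₀, ∃ V : Finset K, (↑V : Set K) ⊆ Dset K k ∧
              (∀ x ∈ V, ∃ a ∈ A, x ≤ a) ∧ (u : WithBot K) ≤ supb V := by
            intro u hu
            by_cases htriv : ∃ a ∈ A, u ≤ a
            · refine ⟨{u}, by simpa using hU₀D hu, by simpa using htriv, ?_⟩
              simp [supb]
            · rcases hor u hu with h | h
              · exact absurd ⟨a₁, ha₁, h⟩ htriv
              · have hnt' : ∀ a ∈ A.erase a₁, ¬ u ≤ a := fun a ha hua =>
                  htriv ⟨a, Finset.erase_subset _ _ ha, hua⟩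
                have hleu : (u : WithBot K) ≤ supb (A.erase a₁) := by
                  rw [hsupb']; exact_mod_cast h
                obtain ⟨V, hV1, hV2, hV3⟩ := refine_cover (hU₀D hu) hA'ne hnt' hleu
                exact ⟨V, hV1,
                  fun x hx => (hV2 x hx).imp (fun a h => ⟨Finset.erase_subset _ _ h.1, h.2⟩),
                  hV3⟩
          choose V hV1 hV2 hV3 using hg
          refine ⟨U₀.attach.biUnion (fun u => V u.1 u.2), ?_, ?_, ?_⟩
          · intro x hx
            obtain ⟨u, _, hxu⟩ := Finset.mem_biUnion.1 (by exact_mod_cast hx)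
            exact hV1 u.1 u.2 hxu
          · intro x hx
            obtain ⟨u, _, hxu⟩ := Finset.mem_biUnion.1 hx
            exact hV2 u.1 u.2 x hxu
          · refine hple.trans (Finset.sup_le fun u hu => ?_)
            exact (hV3 u hu).trans (Finset.sup_mono
              (Finset.subset_biUnion_of_mem (fun z : {z // z ∈ U₀} => V z.1 z.2)
                (Finset.mem_attach _ ⟨u, hu⟩)))

lemma mem_Dsucc_iff {k : ℕ} {p : K} : p ∈ Dset K (k + 1) ↔ BIN k p := by
  classical
  constructor
  · intro hp a b hab hpa hpb
    obtain ⟨U, t, hUD, href, hlubU, hpt⟩ := hp ({a, b} : Finset K) (a ⊔ b)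
      (by simpa using isLUB_pair) hab
      (by
        intro x hx
        rcases Finset.mem_insert.1 hx with rfl | hx
        · exact hpa
        · rw [Finset.mem_singleton.1 hx]; exact hpb)
    have hUne : U.Nonempty := by
      rcases U.eq_empty_or_nonempty with rfl | h
      · have hta : t ≤ a := hlubU.2 (fun x hx => absurd hx (by simp))
        exact absurd (hpt.trans hta) hpa
      · exact h
    have ht : t = U.sup' hUne id := hlubU.unique (isLUB_sup' U hUne)
    refine ⟨U, hUD, ?_, (coe_le_supb hUne p).2 (ht ▸ hpt)⟩
    intro u hu
    obtain ⟨x, hx, hux⟩ := href u hu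
    rcases Finset.mem_insert.1 hx with rfl | hx
    · exact Or.inl hux
    · exact Or.inr (Finset.mem_singleton.1 hx ▸ hux)
  · intro hbin A s hlub hle hnt
    rcases A.eq_empty_or_nonempty with rfl | hA
    · exact ⟨∅, s, by simp, by simp, hlub, hle⟩
    · have hs : s = A.sup' hA id := hlub.unique (isLUB_sup' A hA)
      obtain ⟨U, hUD, href, hpU⟩ := BIN_refine hbin A.card A le_rfl hnt
        (by rw [hs] at hle; exact (coe_le_supb hA p).2 hle)
      have hUne : U.Nonempty := nonempty_of_coe_le_supb hpU
      exact ⟨U, U.sup' hUne id, hUD, href, isLUB_sup' U hUne, (coe_le_supb hUne p).1 hpU⟩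

end LatticeAux
section Generation

variable {K : Type*} [Lattice K] {Y : Finset K}

lemma closure_ind (hY : latticeClosure (↑Y : Set K) = Set.univ)
    {P : K → Prop} (hgen : ∀ y ∈ Y, P y)
    (hsup : ∀ a b, P a → P b → P (a ⊔ b)) (hinf : ∀ a b, P a → P b → P (a ⊓ b)) :
    ∀ a : K, P a := by
  intro a
  have hsubl : IsSublattice {x : K | P x} :=
    ⟨fun x hx y hy => hsup x y hx hy, fun x hx y hy => hinf x y hx hy⟩
  have h : latticeClosure (↑Y : Set K) ⊆ {x : K | P x} :=
    latticeClosure_min (fun y hy => hgen y (by exact_mod_cast hy)) hsubl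
  rw [hY] at h
  exact h (Set.mem_univ a)

lemma le_generators_sup (hY : latticeClosure (↑Y : Set K) = Set.univ) (hYne : Y.Nonempty) :
    ∀ a : K, a ≤ Y.sup' hYne id :=
  closure_ind hY (fun y hy => Finset.le_sup' id hy)
    (fun _ _ ha hb => sup_le ha hb) (fun _ _ ha _ => inf_le_left.trans ha)

lemma repMeet (hY : latticeClosure (↑Y : Set K) = Set.univ) (hYne : Y.Nonempty)
    {G : Finset K} (hYG : Y ⊆ G) (htop : Y.sup' hYne id ∈ G)
    {p : K} (hcov : ∀ b c : K, p ≤ b ⊔ c → ¬ p ≤ b → ¬ p ≤ c →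
      ∃ g ∈ G, p ≤ g ∧ g ≤ b ⊔ c) :
    ∃ T : Finset K, T ⊆ G ∧ ∃ hT : T.Nonempty, p = T.inf' hT id := by
  classical
  have hne : (G.filter (fun g => p ≤ g)).Nonempty :=
    ⟨Y.sup' hYne id, Finset.mem_filter.2 ⟨htop, le_generators_sup hY hYne p⟩⟩
  have hpq : p ≤ (G.filter (fun g => p ≤ g)).inf' hne id :=
    Finset.le_inf' _ _ (fun g hg => (Finset.mem_filter.1 hg).2)
  have key : ∀ a : K, p ≤ a → (G.filter (fun g => p ≤ g)).inf' hne id ≤ a := by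
    refine closure_ind hY ?_ ?_ ?_
    · intro y hy hpy
      exact Finset.inf'_le id (Finset.mem_filter.2 ⟨hYG hy, hpy⟩)
    · intro a b ha hb hpab
      by_cases hpa : p ≤ a
      · exact (ha hpa).trans le_sup_left
      by_cases hpb : p ≤ b
      · exact (hb hpb).trans le_sup_right
      obtain ⟨g, hg, hpg, hgab⟩ := hcov a b hpab hpa hpb
      exact (Finset.inf'_le id (Finset.mem_filter.2 ⟨hg, hpg⟩)).trans hgab
    · intro a b ha hb hpab
      exact le_inf (ha (hpab.trans inf_le_left)) (hb (hpab.trans inf_le_right))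
  exact ⟨G.filter (fun g => p ≤ g), Finset.filter_subset _ _, hne,
    le_antisymm hpq (key p le_rfl)⟩

lemma finite_infs (G : Finset K) :
    {x : K | ∃ T : Finset K, T ⊆ G ∧ ∃ hT : T.Nonempty, x = T.inf' hT id}.Finite := by
  classical
  have hsub : {x : K | ∃ T : Finset K, T ⊆ G ∧ ∃ hT : T.Nonempty, x = T.inf' hT id} ⊆
      (fun x : K => (x : WithTop K)) ⁻¹'
        ↑(G.powerset.image (fun T => T.inf (fun a => (a : WithTop K)))) := by
    rintro x ⟨T, hTG, hT, rfl⟩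
    simp only [Set.mem_preimage, Finset.coe_image, Set.mem_image, Finset.mem_coe,
      Finset.mem_powerset]
    exact ⟨T, hTG, by simpa [Function.comp] using (Finset.coe_inf' hT (id : K → K)).symm⟩
  exact Set.Finite.subset
    (Set.Finite.preimage WithTop.coe_injective.injOn (Finset.finite_toSet _)) hsub

lemma finite_sups (G : Finset K) :
    {x : K | ∃ T : Finset K, T ⊆ G ∧ ∃ hT : T.Nonempty, x = T.sup' hT id}.Finite := by
  classical
  have hsub : {x : K | ∃ T : Finset K, T ⊆ G ∧ ∃ hT : T.Nonempty, x = T.sup' hT id} ⊆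
      (fun x : K => (x : WithBot K)) ⁻¹'
        ↑(G.powerset.image (fun T => T.sup (fun a => (a : WithBot K)))) := by
    rintro x ⟨T, hTG, hT, rfl⟩
    simp only [Set.mem_preimage, Finset.coe_image, Set.mem_image, Finset.mem_coe,
      Finset.mem_powerset]
    exact ⟨T, hTG, by simpa [Function.comp] using (Finset.coe_sup' hT (id : K → K)).symm⟩
  exact Set.Finite.subset
    (Set.Finite.preimage WithBot.coe_injective.injOn (Finset.finite_toSet _)) hsub

lemma Dset_finite (hY : latticeClosure (↑Y : Set K) = Set.univ) (hYne : Y.Nonempty) :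
    ∀ k : ℕ, (Dset K k).Finite := by
  intro k
  induction k with
  | zero =>
      classical
      apply (finite_infs (insert (Y.sup' hYne id) Y)).subset
      intro p hp
      have h0 := mem_D0_iff.1 hp
      exact repMeet hY hYne (Finset.subset_insert _ _) (Finset.mem_insert_self _ _)
        (fun b c hbc hb hc => absurd ((h0.1 b c hbc).resolve_left hb) hc)
  | succ k ihk =>
      classical
      apply (finite_infs (insert (Y.sup' hYne id)
        (Y ∪ (finite_sups ihk.toFinset).toFinset))).subset
      intro p hp
      apply repMeet hY hYne
      · intro y hy
        exact Finset.mem_insert_of_mem (Finset.mem_union_left _ hy)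
      · exact Finset.mem_insert_self _ _
      · intro b c hbc hb hc
        obtain ⟨U, hUD, hor, hpU⟩ := (mem_Dsucc_iff.1 hp) b c hbc hb hc
        have hUne := nonempty_of_coe_le_supb hpU
        refine ⟨U.sup' hUne id, ?_, (coe_le_supb hUne p).1 hpU,
          Finset.sup'_le _ _ (fun u hu => (hor u hu).elim
            (fun h => h.trans le_sup_left) (fun h => h.trans le_sup_right))⟩
        apply Finset.mem_insert_of_mem
        apply Finset.mem_union_right
        rw [Set.Finite.mem_toFinset]
        refine ⟨U, ?_, hUne, rfl⟩
        intro u hu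
        exact (Set.Finite.mem_toFinset _).2 (hUD hu)

end Generation
section Formulas

/-- The join symbol. -/
def joinSym : latticeLang.Functions 2 := show Fin 2 from ⟨0, by omega⟩

/-- Join of two terms. -/
def tJoin {α : Type*} (s t : latticeLang.Term α) : latticeLang.Term α :=
  Term.func joinSym ![s, t]

variable {K : Type*} [Lattice K]

@[simp] lemma realize_tJoin {α : Type*} (v : α → K) (s t : latticeLang.Term α) :
    (tJoin s t).realize v = s.realize v ⊔ t.realize v := rfl

/-- The formula `s ≤ t`, i.e. `s ⊔ t = t`. -/
def leF {α : Type*} (s t : latticeLang.Term α) : latticeLang.Formula α :=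
  Term.equal (tJoin s t) t

@[simp] lemma realize_leF {α : Type*} {v : α → K} {s t : latticeLang.Term α} :
    (leF s t).Realize v ↔ s.realize v ≤ t.realize v := by
  rw [leF, Formula.realize_equal]
  rw [realize_tJoin]
  exact sup_eq_right

/-- Finite disjunction over a finset. -/
noncomputable def fiSup {α β : Type*} (s : Finset β) (f : β → latticeLang.Formula α) :
    latticeLang.Formula α :=
  BoundedFormula.iSup (fun b : s => f b)

/-- Finite conjunction over a finset. -/
noncomputable def fiInf {α β : Type*} (s : Finset β) (f : β → latticeLang.Formula α) :
    latticeLang.Formula α :=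
  BoundedFormula.iInf (fun b : s => f b)

@[simp] lemma frealize_iSup {α β : Type*} (s : Finset β) (f : β → latticeLang.Formula α)
    (v : α → K) :
    Formula.Realize (fiSup s f) v ↔ ∃ b ∈ s, (f b).Realize v := by
  simp only [fiSup, Formula.Realize, BoundedFormula.realize_iSup, Subtype.exists, exists_prop]

@[simp] lemma frealize_iInf {α β : Type*} (s : Finset β) (f : β → latticeLang.Formula α)
    (v : α → K) :
    Formula.Realize (fiInf s f) v ↔ ∀ b ∈ s, (f b).Realize v := by
  simp only [fiInf, Formula.Realize, BoundedFormula.realize_iInf, Subtype.forall]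

/-- Defining formula for `D₀`: the subject variable is `Sum.inr 0`. -/
noncomputable def phi0 : latticeLang.Formula (Fin 0 ⊕ Fin 1) :=
  (Formula.iAlls (Fin 2)
      ((leF (Term.var (Sum.inl (Sum.inr 0)))
          (tJoin (Term.var (Sum.inr 0)) (Term.var (Sum.inr 1)))).imp
        ((leF (Term.var (Sum.inl (Sum.inr 0))) (Term.var (Sum.inr 0))) ⊔
         (leF (Term.var (Sum.inl (Sum.inr 0))) (Term.var (Sum.inr 1)))))) ⊓
  (Formula.iExs (Fin 1)
      ((leF (Term.var (Sum.inl (Sum.inr 0))) (Term.var (Sum.inr 0))).not))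

lemma realize_phi0 (v : Fin 0 → K) (x : K) :
    phi0.Realize (Sum.elim v (fun _ => x)) ↔ x ∈ Dset K 0 := by
  rw [mem_D0_iff]
  simp only [phi0, Formula.realize_inf, Formula.realize_iAlls, Formula.realize_iExs,
    Formula.realize_imp, Formula.realize_sup, Formula.realize_not, realize_leF,
    realize_tJoin, Term.realize_var, id_eq, Sum.elim_inl, Sum.elim_inr]
  constructor
  · rintro ⟨h1, h2⟩
    refine ⟨fun a b hab => ?_, ?_⟩
    · exact h1 ![a, b] hab
    · obtain ⟨i, hi⟩ := h2
      exact ⟨i 0, hi⟩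
  · rintro ⟨h1, a, ha⟩
    exact ⟨fun i h => h1 (i 0) (i 1) h, ⟨fun _ => a, ha⟩⟩

/-- Defining formula for `D_{k+1}` given an `N`-tuple of parameters enumerating `D_k`.
Variables: `Sum.inl (Sum.inl i)` parameters, `Sum.inl (Sum.inr 0)` the subject. -/
noncomputable def phiStep (N : ℕ) : latticeLang.Formula (Fin N ⊕ Fin 1) :=
  Formula.iAlls (Fin 2) <|
    ((leF (Term.var (Sum.inl (Sum.inr 0)))
        (tJoin (Term.var (Sum.inr 0)) (Term.var (Sum.inr 1)))) ⊓
      ((leF (Term.var (Sum.inl (Sum.inr 0))) (Term.var (Sum.inr 0))).not) ⊓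
      ((leF (Term.var (Sum.inl (Sum.inr 0))) (Term.var (Sum.inr 1))).not)).imp <|
      fiSup (Finset.univ : Finset (Finset (Fin N))) fun S =>
        (fiInf S fun i =>
          (leF (Term.var (Sum.inl (Sum.inl i))) (Term.var (Sum.inr 0))) ⊔
          (leF (Term.var (Sum.inl (Sum.inl i))) (Term.var (Sum.inr 1)))) ⊓
        (Formula.iAlls
          (Fin 1) <|
          (fiInf S fun i =>
            leF (Term.var (Sum.inl (Sum.inl (Sum.inl i)))) (Term.var (Sum.inr 0))).imp
          (leF (Term.var (Sum.inl (Sum.inl (Sum.inr 0)))) (Term.var (Sum.inr 0))))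

lemma realize_phiStep {N k : ℕ} (d : Fin N → K)
    (hd : ∀ i, d i ∈ Dset K k) (hcov : ∀ x ∈ Dset K k, ∃ i, d i = x) (x : K) :
    (phiStep N).Realize (Sum.elim d (fun _ => x)) ↔ x ∈ Dset K (k + 1) := by
  classical
  rw [mem_Dsucc_iff]
  simp only [phiStep, Formula.realize_iAlls, Formula.realize_imp, Formula.realize_inf,
    Formula.realize_not, realize_leF, realize_tJoin, Term.realize_var, id_eq,
    Sum.elim_inl, Sum.elim_inr, frealize_iSup, frealize_iInf, Formula.realize_sup,
    Finset.mem_univ, true_and]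
  constructor
  · intro h a b hab hpa hpb
    obtain ⟨S, hor, hub⟩ := h ![a, b] ⟨⟨hab, hpa⟩, hpb⟩
    rcases S.eq_empty_or_nonempty with rfl | hS
    · exact absurd (hub (fun _ => a) (by simp)) hpa
    · refine ⟨S.image d, ?_, ?_, ?_⟩
      · intro u hu
        obtain ⟨i, _, rfl⟩ := Finset.mem_image.1 (by exact_mod_cast hu)
        exact hd i
      · intro u hu
        obtain ⟨i, hi, rfl⟩ := Finset.mem_image.1 hu
        exact hor i hi
      · have hSne : (S.image d).Nonempty := hS.image d
        rw [coe_le_supb hSne]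
        exact hub (fun _ => (S.image d).sup' hSne id)
          (fun i hi => Finset.le_sup' id (Finset.mem_image_of_mem d hi))
  · intro hbin i2 hguard
    obtain ⟨⟨hab, hpa⟩, hpb⟩ := hguard
    obtain ⟨U, hUD, hor, hpU⟩ := hbin (i2 0) (i2 1) hab hpa hpb
    have hUne : U.Nonempty := nonempty_of_coe_le_supb hpU
    refine ⟨Finset.univ.filter (fun i => d i ∈ U), ?_, ?_⟩
    · intro i hi
      exact hor (d i) (Finset.mem_filter.1 hi).2
    · intro i1 hupper
      refine ((coe_le_supb hUne x).1 hpU).trans (Finset.sup'_le _ _ fun u hu => ?_)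
      obtain ⟨i, hdi⟩ := hcov u (hUD hu)
      have hiS : i ∈ Finset.univ.filter (fun i => d i ∈ U) :=
        Finset.mem_filter.2 ⟨Finset.mem_univ i, hdi ▸ hu⟩
      simpa [hdi] using hupper i hiS

end Formulas
section Transfer

/-- Variable relabeling used in `capBody`. -/
def gmap (N M : ℕ) : (Fin N ⊕ Fin 1) → ((Fin N ⊕ Fin M) ⊕ Fin 1) :=
  Sum.elim (fun i => Sum.inl (Sum.inl i)) (fun j => Sum.inr j)

/-- Body of `capF`: every realization of `φ` equals one of the `Fin M`-indexed
parameters. -/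
noncomputable def capBody {N : ℕ} (M : ℕ) (φ : latticeLang.Formula (Fin N ⊕ Fin 1)) :
    latticeLang.Formula (Fin N ⊕ Fin M) :=
  Formula.iAlls (Fin 1) <|
    (φ.relabel (gmap N M)).imp <|
      fiSup (Finset.univ : Finset (Fin M)) fun j =>
        Term.equal (Term.var (Sum.inr 0)) (Term.var (Sum.inl (Sum.inr j)))

/-- `capF M φ` says: there are `M` elements covering all realizations of `φ`. -/
noncomputable def capF {N : ℕ} (M : ℕ) (φ : latticeLang.Formula (Fin N ⊕ Fin 1)) :
    latticeLang.Formula (Fin N) :=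
  Formula.iExs (Fin M) (capBody M φ)

variable {F' : Type u} {K' : Type u'} [Lattice F'] [Lattice K']

lemma gmap_val {N M : ℕ} (vv : Fin N ⊕ Fin M → K') (i1 : Fin 1 → K') :
    ((fun a => Sum.elim vv i1 a) ∘ gmap N M)
      = Sum.elim (fun i => vv (Sum.inl i)) (fun _ => i1 0) := by
  funext z
  rcases z with i | j
  · rfl
  · rw [Subsingleton.elim j (0 : Fin 1)]
    rfl

lemma realize_capBody {N M : ℕ} (φ : latticeLang.Formula (Fin N ⊕ Fin 1))
    (vv : Fin N ⊕ Fin M → K') :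
    (capBody M φ).Realize vv ↔
      ∀ x : K', φ.Realize (Sum.elim (fun i => vv (Sum.inl i)) (fun _ => x)) →
        ∃ j : Fin M, x = vv (Sum.inr j) := by
  rw [capBody, Formula.realize_iAlls]
  constructor
  · intro h x hx
    have h1 := h (fun _ => x)
    rw [Formula.realize_imp, Formula.realize_relabel, gmap_val] at h1
    have h2 := h1 (by exact hx)
    rw [frealize_iSup] at h2
    obtain ⟨j, -, hj⟩ := h2
    rw [Formula.realize_equal] at hj
    simp only [Term.realize_var, id_eq, Sum.elim_inl, Sum.elim_inr] at hj
    exact ⟨j, by exact hj⟩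
  · intro h i1
    rw [Formula.realize_imp, Formula.realize_relabel, gmap_val]
    intro hx
    obtain ⟨j, hj⟩ := h (i1 0) (by exact hx)
    rw [frealize_iSup]
    refine ⟨j, Finset.mem_univ j, ?_⟩
    rw [Formula.realize_equal]
    simp only [Term.realize_var, id_eq, Sum.elim_inl, Sum.elim_inr]
    exact (by exact hj)

/-- A finite subset of `K'` which is definable with parameters in the range of an
elementary embedding is contained in the range of that embedding. -/
lemma finite_definable_subset_range (e : latticeLang.ElementaryEmbedding F' K')
    {N : ℕ} (φ : latticeLang.Formula (Fin N ⊕ Fin 1)) (par : Fin N → F')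
    {S : Set K'} (hfin : S.Finite)
    (hdef : ∀ x : K', φ.Realize (Sum.elim (fun i => e (par i)) (fun _ => x)) ↔ x ∈ S) :
    S ⊆ Set.range e := by
  classical
  obtain ⟨M, c, hc⟩ := hfin.fin_embedding
  have hK : (capF M φ).Realize ((e : F' → K') ∘ par) := by
    rw [capF, Formula.realize_iExs]
    refine ⟨fun j => c j, ?_⟩
    rw [realize_capBody]
    intro x hx
    have hmem : x ∈ S := (hdef x).1 (by exact hx)
    rw [← hc] at hmem
    obtain ⟨j, hj⟩ := hmem
    exact ⟨j, by exact hj.symm⟩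
  rw [e.map_formula] at hK
  rw [capF, Formula.realize_iExs] at hK
  obtain ⟨w, hw⟩ := hK
  have hup := (e.map_formula (capBody M φ) (fun a => Sum.elim par w (id a))).2 hw
  rw [realize_capBody] at hup
  intro x hxS
  obtain ⟨j, hj⟩ := hup x (by exact (hdef x).2 hxS)
  exact ⟨w j, by exact hj.symm⟩

lemma Dset_subset_range (e : latticeLang.ElementaryEmbedding F' K') {Y : Finset K'}
    (hY : latticeClosure (↑Y : Set K') = Set.univ) (hYne : Y.Nonempty) :
    ∀ k : ℕ, Dset K' k ⊆ Set.range e := by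
  intro k
  induction k with
  | zero =>
      refine finite_definable_subset_range e phi0 (fun i => i.elim0)
        (Dset_finite hY hYne 0) ?_
      intro x
      exact realize_phi0 _ x
  | succ k ih =>
      classical
      obtain ⟨N, c, hc⟩ := (Dset_finite hY hYne k).fin_embedding
      have hc1 : ∀ i, (c i : K') ∈ Dset K' k := fun i => hc ▸ Set.mem_range_self i
      have hc2 : ∀ x ∈ Dset K' k, ∃ i, (c i : K') = x := fun x hx => by
        rw [← hc] at hx; exact hx
      have hrange : ∀ i, ∃ y : F', e y = c i := fun i => ih (hc1 i)
      choose par hpar using hrange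
      refine finite_definable_subset_range e (phiStep N) par
        (Dset_finite hY hYne (k + 1)) ?_
      intro x
      have hpc : (fun i => e (par i)) = (fun i => (c i : K')) := funext hpar
      rw [hpc]
      exact realize_phiStep (fun i => c i) hc1 hc2 x

end Transfer

/-- If a finitely generated lattice `K` contains a free
lattice `F` on `n ≥ 3` generators as an elementary substructure (here: via an
elementary embedding `e`) and `D(K) = K` (i.e. `K` is lower bounded), then
`K = F`, i.e. the elementary embedding is onto; in particular `K` is isomorphic
to the free lattice on `n` generators. -/
theorem lower_bounded_elementary_extension_of_free_is_free
    (n : ℕ) (hn : 3 ≤ n) (F : Type u) [Lattice F] (X : Set F)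
    (hX : X.ncard = n) (hfree : IsFreeOn F X)
    (K : Type u') [Lattice K]
    (hfg : ∃ Y : Finset K, latticeClosure (↑Y : Set K) = Set.univ)
    (e : latticeLang.ElementaryEmbedding F K)
    (hlb : DFull K = Set.univ) :
    Function.Surjective e ∧ Nonempty (F ≃o K) := by
  obtain ⟨Y, hY⟩ := hfg
  have hX0 : X.Nonempty := by
    rcases X.eq_empty_or_nonempty with rfl | h
    · rw [Set.ncard_empty] at hX; omega
    · exact h
  obtain ⟨x0, -⟩ := hX0
  haveI : Nonempty K := ⟨e x0⟩
  have hYne : Y.Nonempty := by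
    rcases Y.eq_empty_or_nonempty with rfl | h
    · rw [Finset.coe_empty, latticeClosure_empty] at hY
      exact absurd hY Set.empty_ne_univ
    · exact h
  have hsub := Dset_subset_range e hY hYne
  have hsurj : Function.Surjective e := by
    intro x
    have hx : x ∈ DFull K := by rw [hlb]; exact Set.mem_univ x
    obtain ⟨k, hk⟩ := Set.mem_iUnion.1 (show x ∈ ⋃ k, Dset K k from hx)
    exact hsub k hk
  have hle : ∀ a b : F, e a ≤ e b ↔ a ≤ b := by
    intro a b
    have h := e.map_formula
      (leF (Term.var 0) (Term.var 1) : latticeLang.Formula (Fin 2)) ![a, b]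
    simp only [realize_leF, Term.realize_var, Function.comp_apply, Matrix.cons_val_zero,
      Matrix.cons_val_one, Matrix.head_cons] at h
    exact h
  have hinj : Function.Injective e := fun a b hab =>
    le_antisymm ((hle a b).1 (le_of_eq hab)) ((hle b a).1 (le_of_eq hab.symm))
  refine ⟨hsurj, ⟨⟨Equiv.ofBijective e ⟨hinj, hsurj⟩, ?_⟩⟩⟩
  intro a b
  exact hle a b

end FreeLatticePaper
end
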